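/- arXiv:2203.16012 — 6 statements merged into one kernel-verified Lean document; each statement's English description precedes it below -/
import Mathlib

section
/- Let H be a Hermitian operator on a finite-dimensional Hilbert space with nondegenerate smallest eigenvalue ε₀ and unit ground state ψ₀. Let P be an orthogonal projection, set δ₁ = ‖(I − P)ψ₀‖ and δ₂ = ‖P H (I − P) ψ₀‖, and assume δ₁ < 1. Let ε₀' be the smallest eigenvalue of the compression of H to the range of P (assumed nonzero). Then ε₀' ≤ ε₀ + 2δ₂/(1 − δ₁²). -/
section
variable {E : Type*} [NormedAddCommGroup E] [InnerProductSpace ℂ E]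

lemma aux_proj_inner_left (V : Submodule ℂ E) [V.HasOrthogonalProjection]
    (x : E) {u : E} (hu : u ∈ V) :
    (inner ℂ ((V.orthogonalProjectionOnto x : E)) u : ℂ) = inner ℂ x u := by
  have h0 : (inner ℂ (x - (V.orthogonalProjectionOnto x : E)) u : ℂ) = 0 :=
    V.starProjection_inner_eq_zero x u hu
  rw [inner_sub_left, sub_eq_zero] at h0
  exact h0.symm

lemma aux_proj_inner_right (V : Submodule ℂ E) [V.HasOrthogonalProjection]
    (x : E) {u : E} (hu : u ∈ V) :
    (inner ℂ u ((V.orthogonalProjectionOnto x : E)) : ℂ) = inner ℂ u x := by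
  rw [← inner_conj_symm, aux_proj_inner_left V x hu, inner_conj_symm]

end


open Complex in
lemma aux_rayleigh {F : Type*} [NormedAddCommGroup F] [InnerProductSpace ℂ F]
    [FiniteDimensional ℂ F] (T : F →ₗ[ℂ] F) (hT : T.IsSymmetric) (c : ℝ)
    (hc : ∀ r : ℝ, (∃ v : F, ‖v‖ = 1 ∧ T v = (r : ℂ) • v) → c ≤ r)
    (v : F) (hv : ‖v‖ = 1) : c ≤ (inner ℂ v (T v) : ℂ).re := by
  classical
  set n := Module.finrank ℂ F with hn
  let b := hT.eigenvectorBasis rfl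
  let μ := hT.eigenvalues (n := n) rfl
  have hb : ∀ i, T (b i) = (μ i : ℂ) • b i := fun i => hT.apply_eigenvectorBasis rfl i
  have hcμ : ∀ i, c ≤ μ i := fun i => hc (μ i) ⟨b i, b.orthonormal.1 i, hb i⟩
  have hTv : T v = ∑ i, (b.repr v i * (μ i : ℂ)) • b i := by
    conv_lhs => rw [← b.sum_repr v]
    rw [map_sum]
    refine Finset.sum_congr rfl fun i _ => ?_
    rw [map_smul, hb i, smul_smul]
  have hexp : (inner ℂ v (T v) : ℂ) = ∑ i, ((μ i * Complex.normSq (b.repr v i) : ℝ) : ℂ) := by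
    rw [hTv, inner_sum]
    refine Finset.sum_congr rfl fun i _ => ?_
    have hz : (inner ℂ v (b i) : ℂ) = (starRingEnd ℂ) (b.repr v i) := by
      rw [b.repr_apply_apply, inner_conj_symm]
    rw [inner_smul_right, hz, mul_right_comm, Complex.mul_conj]
    push_cast
    ring
  have hsum : ∑ i, Complex.normSq (b.repr v i) = 1 := by
    have h1 : (inner ℂ v v : ℂ) = ∑ i, ((Complex.normSq (b.repr v i) : ℝ) : ℂ) := by
      rw [← b.sum_inner_mul_inner v v]
      refine Finset.sum_congr rfl fun i _ => ?_
      have hz : (inner ℂ v (b i) : ℂ) = (starRingEnd ℂ) (b.repr v i) := by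
        rw [b.repr_apply_apply, inner_conj_symm]
      rw [hz, ← b.repr_apply_apply v i, mul_comm, Complex.mul_conj]
    have h2 : (inner ℂ v v : ℂ) = ((1 : ℝ) : ℂ) := by
      rw [inner_self_eq_norm_sq_to_K, hv]; norm_num
    rw [h2] at h1
    have := congrArg Complex.re h1
    simpa using this.symm
  have hre : (inner ℂ v (T v) : ℂ).re = ∑ i, μ i * Complex.normSq (b.repr v i) := by
    rw [hexp, Complex.re_sum]
    simp
  rw [hre]
  calc c = c * ∑ i, Complex.normSq (b.repr v i) := by rw [hsum, mul_one]
    _ = ∑ i, c * Complex.normSq (b.repr v i) := Finset.mul_sum _ _ _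
    _ ≤ ∑ i, μ i * Complex.normSq (b.repr v i) :=
        Finset.sum_le_sum fun i _ =>
          mul_le_mul_of_nonneg_right (hcμ i) (Complex.normSq_nonneg _)

/-- Robustness of the ground state energy to truncation: if `H'` is the compression of `H`
to the range of the orthogonal projection onto `V`, with `δ₁ = ‖(I−P)ψ₀‖ < 1` and
`δ₂ = ‖P H (I−P) ψ₀‖`, then the lowest eigenvalue `ε₀'` of `H'` satisfies
`ε₀' ≤ ε₀ + 2δ₂/(1−δ₁²)`. -/
theorem truncated_ground_energy_bound
    {E : Type*} [NormedAddCommGroup E] [InnerProductSpace ℂ E] [FiniteDimensional ℂ E]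
    (H : E →ₗ[ℂ] E) (hH : H.IsSymmetric)
    (ψ₀ : E) (ε₀ : ℝ) (hψ₀ : ‖ψ₀‖ = 1) (heig : H ψ₀ = (ε₀ : ℂ) • ψ₀)
    (hmin : ∀ v : E, ‖v‖ = 1 → ε₀ ≤ (inner ℂ v (H v) : ℂ).re)
    (V : Submodule ℂ E) (hV : V ≠ ⊥)
    (H' : V →ₗ[ℂ] V) (hH' : ∀ v : V, (H' v : E) = (V.orthogonalProjectionOnto (H v) : E))
    (ε₀' : ℝ)
    (hε₀' : IsLeast {r : ℝ | ∃ v : V, ‖v‖ = 1 ∧ H' v = (r : ℂ) • v} ε₀')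
    (δ₁ δ₂ : ℝ)
    (hδ₁ : δ₁ = ‖ψ₀ - (V.orthogonalProjectionOnto ψ₀ : E)‖)
    (hδ₂ : δ₂ = ‖(V.orthogonalProjectionOnto (H (ψ₀ - (V.orthogonalProjectionOnto ψ₀ : E))) : E)‖)
    (hδ₁lt : δ₁ < 1) :
    ε₀' ≤ ε₀ + 2 * δ₂ / (1 - δ₁ ^ 2) := by
  classical
  set p : E := (V.orthogonalProjectionOnto ψ₀ : E) with hpdef
  set w : E := ψ₀ - p with hwdef
  have hp : p ∈ V := SetLike.coe_mem _
  have hw : w ∈ Vᗮ := V.sub_starProjection_mem_orthogonal ψ₀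
  have hpw : (inner ℂ p w : ℂ) = 0 := Submodule.inner_right_of_mem_orthogonal hp hw
  have hδ₁0 : 0 ≤ δ₁ := hδ₁ ▸ norm_nonneg _
  have hδ₂0 : 0 ≤ δ₂ := hδ₂ ▸ norm_nonneg _
  have hpos : 0 < 1 - δ₁ ^ 2 := by nlinarith
  have hpyth : ‖p‖ ^ 2 = 1 - δ₁ ^ 2 := by
    have h := norm_add_sq_eq_norm_sq_add_norm_sq_of_inner_eq_zero p w hpw
    have hpw' : p + w = ψ₀ := by rw [hwdef]; abel
    rw [hpw', hψ₀] at h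
    rw [hδ₁]
    nlinarith
  have hppos : 0 < ‖p‖ := by nlinarith [norm_nonneg p]
  have hple1 : ‖p‖ ≤ 1 := by nlinarith
  set c : ℝ := ‖p‖⁻¹ with hcdef
  have hc1 : c * ‖p‖ = 1 := inv_mul_cancel₀ (ne_of_gt hppos)
  have hcpos : 0 < c := inv_pos.mpr hppos
  -- the trial vector
  set u : V := (c : ℂ) • (V.orthogonalProjectionOnto ψ₀) with hudef
  have hucoe : (u : E) = (c : ℂ) • p := by rw [hudef, Submodule.coe_smul]
  have hunorm : ‖u‖ = 1 := by
    rw [hudef, norm_smul]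
    simp only [Complex.norm_real, Real.norm_eq_abs, abs_of_pos hcpos]
    have : ‖V.orthogonalProjectionOnto ψ₀‖ = ‖p‖ := rfl
    rw [this, hc1]
  -- H' is symmetric
  have hkey : ∀ x y : V, (inner ℂ (H' x) y : ℂ) = inner ℂ (H (x : E)) (y : E) := by
    intro x y
    rw [Submodule.coe_inner, hH' x, aux_proj_inner_left V (H x) y.2]
  have hH'sym : H'.IsSymmetric := by
    intro x y
    rw [hkey x y, hH x y, Submodule.coe_inner, ← aux_proj_inner_right V (H y) x.2, ← hH' y]
  -- the lower-bound property applied to u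
  have hray : ε₀' ≤ (inner ℂ u (H' u) : ℂ).re :=
    aux_rayleigh H' hH'sym ε₀' (fun r hr => hε₀'.2 hr) u hunorm
  -- compute the Rayleigh quotient
  have hHp : H p = (ε₀ : ℂ) • ψ₀ - H w := by
    rw [hwdef, map_sub, heig]; abel
  have hpψ : (inner ℂ p ψ₀ : ℂ) = ((‖p‖ ^ 2 : ℝ) : ℂ) := by
    have : ψ₀ = p + w := by rw [hwdef]; abel
    rw [this, inner_add_right, hpw, add_zero, inner_self_eq_norm_sq_to_K]
    norm_cast
  set z : ℂ := inner ℂ p ((V.orthogonalProjectionOnto (H w) : E)) with hzdef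
  have hpHp : (inner ℂ p (H p) : ℂ) = ((ε₀ * ‖p‖ ^ 2 : ℝ) : ℂ) - z := by
    rw [hHp, inner_sub_right, inner_smul_right, hpψ, hzdef,
      aux_proj_inner_right V (H w) hp]
    push_cast
    ring
  have hVHV : (inner ℂ u (H' u) : ℂ) = ((c ^ 2 : ℝ) : ℂ) * (inner ℂ p (H p) : ℂ) := by
    rw [Submodule.coe_inner, hH' u, aux_proj_inner_right V (H (u : E)) u.2, hucoe,
      map_smul, inner_smul_left, inner_smul_right, Complex.conj_ofReal]
    push_cast
    ring
  have hzbound : |z.re| ≤ ‖p‖ * δ₂ := by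
    have h1 : ‖z‖ ≤ ‖p‖ * ‖(V.orthogonalProjectionOnto (H w) : E)‖ := norm_inner_le_norm _ _
    have h2 : |z.re| ≤ ‖z‖ := Complex.abs_re_le_norm z
    rw [hδ₂]
    calc |z.re| ≤ ‖z‖ := h2
      _ ≤ _ := h1
  have hre : (inner ℂ u (H' u) : ℂ).re = c ^ 2 * (ε₀ * ‖p‖ ^ 2 - z.re) := by
    rw [hVHV, hpHp]
    simp only [Complex.mul_re, Complex.sub_re, Complex.sub_im, Complex.ofReal_re,
      Complex.ofReal_im, Complex.mul_im]
    ring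
  -- put everything together
  have hfinal : ε₀' ≤ ε₀ - c ^ 2 * z.re := by
    have hcp : c ^ 2 * ‖p‖ ^ 2 = 1 := by rw [← mul_pow, hc1, one_pow]
    rw [hre] at hray
    have heq : c ^ 2 * (ε₀ * ‖p‖ ^ 2 - z.re) = ε₀ - c ^ 2 * z.re := by
      linear_combination ε₀ * hcp
    linarith [heq ▸ hray]
  have habs : -(‖p‖ * δ₂) ≤ z.re := by
    have := abs_le.mp hzbound
    linarith [this.1]
  have hinv : (1 - δ₁ ^ 2)⁻¹ = c ^ 2 := by
    rw [← hpyth, hcdef]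
    rw [← inv_pow]
  rw [div_eq_mul_inv, hinv]
  have hc2 : (0:ℝ) ≤ c ^ 2 := sq_nonneg c
  nlinarith [mul_le_mul_of_nonneg_left habs hc2, mul_nonneg hδ₂0 (le_of_lt hcpos),
    mul_nonneg (mul_nonneg hδ₂0 (le_of_lt hcpos)) (le_of_lt hcpos)]
end

section
/- Under the hypotheses of the previous statement, additionally assume the spectral gap condition: all eigenvalues of H other than ε₀ are at least ε₁ = ε₀ + Δ with Δ > 0, and that 2δ₂/(1 − δ₁²) ≤ Δ/2. Then the smallest eigenvalue ε₀' of the compressed operator H' satisfies ε₀' ≤ ε₁' − Δ/2, where ε₁' is the second-smallest eigenvalue of H' (counted with multiplicity); in particular ε₀' is a simple eigenvalue of H' and the compressed operator has spectral gap at least Δ/2. -/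
open scoped InnerProductSpace ComplexConjugate

private lemma diag_inner_eq {F : Type*} [NormedAddCommGroup F] [InnerProductSpace ℂ F]
    {m : ℕ} (b : OrthonormalBasis (Fin m) ℂ F) (T : F →ₗ[ℂ] F) (μ : Fin m → ℝ)
    (hb : ∀ i, T (b i) = (μ i : ℂ) • b i) (v : F) :
    (inner ℂ v (T v) : ℂ) = ((∑ i, μ i * Complex.normSq (b.repr v i) : ℝ) : ℂ) := by
  conv_lhs => rw [← b.sum_repr v]
  rw [map_sum]
  have hT : (∑ i, T (b.repr v i • b i)) = ∑ i, ((μ i : ℂ) * b.repr v i) • b i :=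
    Finset.sum_congr rfl fun i _ => by rw [map_smul, hb i, smul_smul, mul_comm]
  rw [hT, b.orthonormal.inner_sum]
  push_cast
  refine Finset.sum_congr rfl fun i _ => ?_
  rw [show conj (b.repr v i) * ((μ i : ℂ) * b.repr v i)
      = (μ i : ℂ) * (b.repr v i * conj (b.repr v i)) from by ring, Complex.mul_conj]

private lemma normSq_sum_eq {F : Type*} [NormedAddCommGroup F] [InnerProductSpace ℂ F]
    {m : ℕ} (b : OrthonormalBasis (Fin m) ℂ F) (v : F) :
    ∑ i, Complex.normSq (b.repr v i) = ‖v‖ ^ 2 := by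
  rw [← b.repr.norm_map v, EuclideanSpace.norm_eq, Real.sq_sqrt (by positivity)]
  simp [← Complex.sq_norm]

set_option maxHeartbeats 1000000 in
/-- Robustness of the spectral gap to truncation: under the hypotheses of the ground-energy
robustness lemma, if additionally all eigenvalues of `H` other than `ε₀` are at least
`ε₁ = ε₀ + Δ` and `2δ₂/(1−δ₁²) ≤ Δ/2`, then the two smallest eigenvalues `ε₀' = μ' 0` and
`ε₁' = μ' 1` of the compression `H'` (listed in nondecreasing order with multiplicity via an
orthonormal eigenbasis) satisfy `ε₀' ≤ ε₁' − Δ/2`; in particular `ε₀'` is a simple eigenvalue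
and `H'` has spectral gap at least `Δ/2`. -/
theorem truncated_gap_bound
    {E : Type*} [NormedAddCommGroup E] [InnerProductSpace ℂ E] [FiniteDimensional ℂ E]
    (H : E →ₗ[ℂ] E) (hH : H.IsSymmetric)
    (ψ₀ : E) (ε₀ Δ : ℝ) (hψ₀ : ‖ψ₀‖ = 1) (heig : H ψ₀ = (ε₀ : ℂ) • ψ₀)
    (hΔ : 0 < Δ)
    (hmin : ∀ v : E, ‖v‖ = 1 → ε₀ ≤ (inner ℂ v (H v) : ℂ).re)
    (hother : ∀ v : E, ‖v‖ = 1 → (inner ℂ ψ₀ v : ℂ) = 0 → ε₀ + Δ ≤ (inner ℂ v (H v) : ℂ).re)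
    (V : Submodule ℂ E)
    (H' : V →ₗ[ℂ] V) (hH' : ∀ v : V, (H' v : E) = (V.orthogonalProjection (H v) : E))
    {m : ℕ} (hm : 2 ≤ m)
    (b' : OrthonormalBasis (Fin m) ℂ V) (μ' : Fin m → ℝ) (hμ' : Monotone μ')
    (hb' : ∀ i, H' (b' i) = (μ' i : ℂ) • b' i)
    (δ₁ δ₂ : ℝ)
    (hδ₁ : δ₁ = ‖ψ₀ - (V.orthogonalProjection ψ₀ : E)‖)
    (hδ₂ : δ₂ = ‖(V.orthogonalProjection (H (ψ₀ - (V.orthogonalProjection ψ₀ : E))) : E)‖)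
    (hδ₁lt : δ₁ < 1)
    (hsmall : 2 * δ₂ / (1 - δ₁ ^ 2) ≤ Δ / 2) :
    μ' ⟨0, by omega⟩ ≤ μ' ⟨1, by omega⟩ - Δ / 2 := by
  classical
  set i0 : Fin m := ⟨0, by omega⟩
  set i1 : Fin m := ⟨1, by omega⟩
  have hi01 : i0 ≠ i1 := by simp [i0, i1, Fin.ext_iff]
  have hδ₁0 : 0 ≤ δ₁ := hδ₁ ▸ norm_nonneg _
  have hδ₂0 : 0 ≤ δ₂ := hδ₂ ▸ norm_nonneg _
  have hd : 0 < 1 - δ₁ ^ 2 := by nlinarith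
  -- compression identity
  have hcomp : ∀ v : V, (inner ℂ v (H' v) : ℂ) = (inner ℂ (v : E) (H (v : E)) : ℂ) := by
    intro v
    have h : H' v = V.orthogonalProjection (H (v : E)) := Subtype.coe_injective (hH' v)
    rw [h, Submodule.inner_orthogonalProjectionOnto_eq_of_mem_left]
  -- Part B : ε₀ + Δ ≤ μ' i1
  have hB : ε₀ + Δ ≤ μ' i1 := by
    set α : ℂ := inner ℂ ψ₀ ((b' i0 : V) : E)
    set β : ℂ := inner ℂ ψ₀ ((b' i1 : V) : E)
    have o00 : (inner ℂ (b' i0) (b' i0) : ℂ) = 1 := by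
      rw [@inner_self_eq_norm_sq_to_K ℂ]; rw [b'.orthonormal.1 i0]; norm_num
    have o11 : (inner ℂ (b' i1) (b' i1) : ℂ) = 1 := by
      rw [@inner_self_eq_norm_sq_to_K ℂ]; rw [b'.orthonormal.1 i1]; norm_num
    have o01 : (inner ℂ (b' i0) (b' i1) : ℂ) = 0 := b'.orthonormal.2 hi01
    have o10 : (inner ℂ (b' i1) (b' i0) : ℂ) = 0 := b'.orthonormal.2 (Ne.symm hi01)
    have hμ01 : μ' i0 ≤ μ' i1 := hμ' (by simp [i0, i1, Fin.le_def])
    set w : V := β • b' i0 - α • b' i1 with hw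
    have hwnorm : ‖w‖ ^ 2 = Complex.normSq β + Complex.normSq α := by
      have : (inner ℂ w w : ℂ) = ((Complex.normSq β + Complex.normSq α : ℝ) : ℂ) := by
        simp only [hw, inner_sub_left, inner_sub_right, inner_smul_left, inner_smul_right,
          o00, o11, o01, o10, mul_zero, mul_one, zero_sub, sub_zero, sub_neg_eq_add]
        rw [show β * (starRingEnd ℂ) β - α * -(starRingEnd ℂ) α
            = β * (starRingEnd ℂ) β + α * (starRingEnd ℂ) α from by ring,
          Complex.mul_conj, Complex.mul_conj]
        push_cast; ring
      have h2 := norm_sq_eq_re_inner (𝕜 := ℂ) w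
      rw [this] at h2
      simpa using h2
    by_cases hw0 : w = 0
    · -- then α = β = 0, use b' i0 itself
      have hβ0 : β = 0 := by
        have : (inner ℂ (b' i0) w : ℂ) = 0 := by rw [hw0, inner_zero_right]
        simp only [hw, inner_sub_right, inner_smul_right, o00, o01, mul_one, mul_zero,
          sub_zero] at this
        exact this
      have := hother ((b' i0 : V) : E) (by rw [Submodule.norm_coe]; exact b'.orthonormal.1 i0)
        (by
          have hα0 : α = 0 := by
            have : (inner ℂ (b' i1) w : ℂ) = 0 := by rw [hw0, inner_zero_right]
            simp only [hw, inner_sub_right, inner_smul_right, o10, o11, mul_one, mul_zero,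
              zero_sub, neg_eq_zero] at this
            exact this
          exact hα0)
      have hval : (inner ℂ ((b' i0 : V) : E) (H ((b' i0 : V) : E)) : ℂ).re = μ' i0 := by
        rw [← hcomp, hb' i0, inner_smul_right, o00, mul_one, Complex.ofReal_re]
      rw [hval] at this
      linarith
    · -- normalize w
      have hwn : 0 < ‖w‖ := norm_pos_iff.mpr hw0
      set u : V := ((‖w‖⁻¹ : ℝ) : ℂ) • w with hu
      have hun : ‖u‖ = 1 := by
        rw [hu, norm_smul, Complex.norm_real, Real.norm_eq_abs,
          abs_of_nonneg (inv_nonneg.mpr hwn.le), inv_mul_cancel₀ (ne_of_gt hwn)]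
      have huE : ‖((u : V) : E)‖ = 1 := by rw [Submodule.norm_coe]; exact hun
      have horth : (inner ℂ ψ₀ ((u : V) : E) : ℂ) = 0 := by
        have hwE : ((w : V) : E) = β • ((b' i0 : V) : E) - α • ((b' i1 : V) : E) := by
          simp [hw]
        have : (inner ℂ ψ₀ ((w : V) : E) : ℂ) = 0 := by
          rw [hwE, inner_sub_right, inner_smul_right, inner_smul_right]
          change β * α - α * β = 0
          ring
        rw [hu]
        push_cast [Submodule.coe_smul]
        rw [inner_smul_right, this, mul_zero]
      have hray := hother ((u : V) : E) huE horth
      have hval : (inner ℂ ((u : V) : E) (H ((u : V) : E)) : ℂ).re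
          = ‖w‖⁻¹ ^ 2 * (μ' i0 * Complex.normSq β + μ' i1 * Complex.normSq α) := by
        rw [← hcomp]
        have hH'w : H' w = (β * (μ' i0 : ℂ)) • b' i0 - (α * (μ' i1 : ℂ)) • b' i1 := by
          rw [hw, map_sub, map_smul, map_smul, hb' i0, hb' i1, smul_smul, smul_smul,
            mul_comm (β) _, mul_comm (α) _, mul_comm ((μ' i0 : ℂ)) β, mul_comm ((μ' i1 : ℂ)) α]
        have : (inner ℂ u (H' u) : ℂ)
            = ((‖w‖⁻¹ ^ 2 : ℝ) : ℂ) * (inner ℂ w (H' w) : ℂ) := by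
          rw [hu, map_smul, inner_smul_left, inner_smul_right, Complex.conj_ofReal]
          push_cast; ring
        rw [this, hH'w]
        simp only [hw, inner_sub_left, inner_sub_right, inner_smul_left, inner_smul_right,
          o00, o11, o01, o10, mul_zero, mul_one, zero_sub, sub_zero, sub_neg_eq_add]
        rw [show β * (μ' i0 : ℂ) * (starRingEnd ℂ) β - α * (μ' i1 : ℂ) * -((starRingEnd ℂ) α)
            = (μ' i0 : ℂ) * (β * (starRingEnd ℂ) β) + (μ' i1 : ℂ) * (α * (starRingEnd ℂ) α)
            from by ring, Complex.mul_conj, Complex.mul_conj]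
        simp only [← Complex.ofReal_mul, ← Complex.ofReal_add, Complex.ofReal_re]
      rw [hval] at hray
      have hle : ‖w‖⁻¹ ^ 2 * (μ' i0 * Complex.normSq β + μ' i1 * Complex.normSq α)
          ≤ μ' i1 := by
        have h1 : μ' i0 * Complex.normSq β + μ' i1 * Complex.normSq α
            ≤ μ' i1 * (Complex.normSq β + Complex.normSq α) := by
          nlinarith [Complex.normSq_nonneg β, Complex.normSq_nonneg α]
        have h2 : ‖w‖⁻¹ ^ 2 * (Complex.normSq β + Complex.normSq α) = 1 := by
          rw [← hwnorm, inv_pow, inv_mul_cancel₀ (pow_ne_zero 2 (ne_of_gt hwn))]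
        calc ‖w‖⁻¹ ^ 2 * (μ' i0 * Complex.normSq β + μ' i1 * Complex.normSq α)
            ≤ ‖w‖⁻¹ ^ 2 * (μ' i1 * (Complex.normSq β + Complex.normSq α)) := by
              apply mul_le_mul_of_nonneg_left h1 (by positivity)
          _ = μ' i1 * (‖w‖⁻¹ ^ 2 * (Complex.normSq β + Complex.normSq α)) := by ring
          _ = μ' i1 := by rw [h2, mul_one]
      linarith
  -- Part A : μ' i0 * (1 - δ₁²) ≤ ε₀ * (1 - δ₁²) + δ₂
  have hA : μ' i0 * (1 - δ₁ ^ 2) ≤ ε₀ * (1 - δ₁ ^ 2) + δ₂ := by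
    set φ : V := V.orthogonalProjection ψ₀ with hφ
    have hproj : (inner ℂ (ψ₀ - ((φ : V) : E)) ((φ : V) : E) : ℂ) = 0 :=
      by have := Submodule.starProjection_inner_eq_zero (K := V) ψ₀ _ φ.2
         rw [Submodule.starProjection_apply] at this; exact this
    have hφnorm : ‖((φ : V) : E)‖ ^ 2 = 1 - δ₁ ^ 2 := by
      have hpyth : ‖ψ₀‖ ^ 2 = ‖ψ₀ - ((φ : V) : E)‖ ^ 2 + ‖((φ : V) : E)‖ ^ 2 := by
        have := norm_add_sq (𝕜 := ℂ) (ψ₀ - ((φ : V) : E)) ((φ : V) : E)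
        rw [sub_add_cancel] at this
        rw [this, hproj]
        simp
      rw [hψ₀] at hpyth
      rw [hδ₁]
      nlinarith
    have hφV : ‖φ‖ ^ 2 = 1 - δ₁ ^ 2 := by rw [← Submodule.norm_coe]; exact hφnorm
    -- lower bound for Rayleigh via eigenbasis
    have hlow : μ' i0 * (1 - δ₁ ^ 2) ≤ (inner ℂ φ (H' φ) : ℂ).re := by
      rw [diag_inner_eq b' H' μ' hb' φ, Complex.ofReal_re]
      have hge : ∀ i ∈ Finset.univ, μ' i0 * Complex.normSq (b'.repr φ i)
          ≤ μ' i * Complex.normSq (b'.repr φ i) := by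
        intro i _
        apply mul_le_mul_of_nonneg_right (hμ' (by simp [i0, Fin.le_def])) (Complex.normSq_nonneg _)
      calc μ' i0 * (1 - δ₁ ^ 2) = μ' i0 * (∑ i, Complex.normSq (b'.repr φ i)) := by
            rw [normSq_sum_eq b' φ, hφV]
        _ = ∑ i, μ' i0 * Complex.normSq (b'.repr φ i) := by rw [Finset.mul_sum]
        _ ≤ ∑ i, μ' i * Complex.normSq (b'.repr φ i) := Finset.sum_le_sum hge
    -- upper bound for Rayleigh
    have hup : (inner ℂ φ (H' φ) : ℂ).re ≤ ε₀ * (1 - δ₁ ^ 2) + δ₂ := by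
      rw [hcomp]
      have hsplit : (inner ℂ ((φ : V) : E) (H ((φ : V) : E)) : ℂ)
          = (inner ℂ ((φ : V) : E) (H ψ₀) : ℂ)
            - (inner ℂ ((φ : V) : E) (H (ψ₀ - ((φ : V) : E))) : ℂ) := by
        rw [← inner_sub_right, ← map_sub, sub_sub_cancel]
      have hterm1 : (inner ℂ ((φ : V) : E) (H ψ₀) : ℂ).re = ε₀ * (1 - δ₁ ^ 2) := by
        rw [heig, inner_smul_right]
        have hinner : (inner ℂ ((φ : V) : E) ψ₀ : ℂ) = ((1 - δ₁ ^ 2 : ℝ) : ℂ) := by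
          have h1 : (inner ℂ ((φ : V) : E) (ψ₀ - ((φ : V) : E)) : ℂ) = 0 := by
            rw [← inner_conj_symm, hproj, map_zero]
          have h2 : (inner ℂ ((φ : V) : E) ψ₀ : ℂ)
              = (inner ℂ ((φ : V) : E) (ψ₀ - ((φ : V) : E)) : ℂ)
                + (inner ℂ ((φ : V) : E) ((φ : V) : E) : ℂ) := by
            rw [← inner_add_right, sub_add_cancel]
          rw [h2, h1, zero_add, @inner_self_eq_norm_sq_to_K ℂ]
          norm_cast
          exact congrArg _ hφnorm
        rw [hinner, ← Complex.ofReal_mul, Complex.ofReal_re]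
      have hterm2 : |(inner ℂ ((φ : V) : E) (H (ψ₀ - ((φ : V) : E))) : ℂ).re| ≤ δ₂ := by
        set y : E := H (ψ₀ - ((φ : V) : E)) with hy
        have h1 : (inner ℂ ((φ : V) : E) y : ℂ)
            = (inner ℂ ((φ : V) : E) ((V.orthogonalProjection y : V) : E) : ℂ) := by
          have h0 : (inner ℂ ((φ : V) : E) (y - ((V.orthogonalProjection y : V) : E)) : ℂ) = 0 := by
            rw [← inner_conj_symm, ← Submodule.starProjection_apply,
              Submodule.starProjection_inner_eq_zero (K := V) y _ φ.2, map_zero]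
          rw [inner_sub_right, sub_eq_zero] at h0
          exact h0
        rw [h1]
        calc |(inner ℂ ((φ : V) : E) ((V.orthogonalProjection y : V) : E) : ℂ).re|
            ≤ ‖(inner ℂ ((φ : V) : E) ((V.orthogonalProjection y : V) : E) : ℂ)‖ :=
              Complex.abs_re_le_norm _
          _ ≤ ‖((φ : V) : E)‖ * ‖((V.orthogonalProjection y : V) : E)‖ := norm_inner_le_norm _ _
          _ ≤ 1 * δ₂ := by
              apply mul_le_mul
              · nlinarith [norm_nonneg ((φ : V) : E)]
              · rw [hδ₂]
              · exact norm_nonneg _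
              · norm_num
          _ = δ₂ := one_mul _
      rw [hsplit, Complex.sub_re, hterm1]
      have := abs_le.mp hterm2
      linarith
    linarith
  -- combine
  have hsmall' : 2 * δ₂ ≤ Δ / 2 * (1 - δ₁ ^ 2) := by
    rw [div_le_iff₀ hd] at hsmall
    linarith
  nlinarith [hd, hB]
end

section
/- Let H be Hermitian on a finite-dimensional Hilbert space with nondegenerate smallest eigenvalue ε₀ (unit eigenvector ψ₀) and spectral gap Δ = ε₁ − ε₀ > 0 to the rest of the spectrum. Let ψ₀' be a unit eigenvector of the compression H' of H to the range of a projection P, corresponding to the smallest eigenvalue ε₀' of H'. With δ₁ = ‖(I−P)ψ₀‖ < 1 and δ₂ = ‖P H(I−P)ψ₀‖, the fidelity satisfies |⟨ψ₀'|ψ₀⟩|² ≥ 1 − (2δ₂)/(Δ(1−δ₁²)); consequently the trace distance obeys D(ψ₀', ψ₀) ≤ sqrt(2δ₂/(Δ(1−δ₁²))). -/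
lemma min_eig_le_rayleigh {W : Type*} [NormedAddCommGroup W] [InnerProductSpace ℂ W]
    [FiniteDimensional ℂ W] (T : W →ₗ[ℂ] W) (hT : T.IsSymmetric) (ε : ℝ)
    (hleast : IsLeast {r : ℝ | ∃ v : W, ‖v‖ = 1 ∧ T v = (r : ℂ) • v} ε)
    (v : W) (hv : ‖v‖ = 1) : ε ≤ (inner ℂ v (T v) : ℂ).re := by
  set n := Module.finrank ℂ W with hn
  let b := hT.eigenvectorBasis rfl
  let lam := hT.eigenvalues (hn := rfl)
  have hbi : ∀ i, T (b i) = (lam i : ℂ) • b i := fun i => hT.apply_eigenvectorBasis rfl i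
  have hεlam : ∀ i, ε ≤ lam i := fun i =>
    hleast.2 ⟨b i, b.orthonormal.1 i, hbi i⟩
  have hmc : ∀ i, (inner ℂ v (b i) : ℂ) * inner ℂ (b i) v = ((‖(inner ℂ v (b i) : ℂ)‖^2 : ℝ) : ℂ) := by
    intro i
    rw [← inner_conj_symm (b i) v, Complex.mul_conj]
    norm_cast
    simp [Complex.normSq_eq_norm_sq]
  have key : (inner ℂ v (T v) : ℂ) = ((∑ i, lam i * ‖(inner ℂ v (b i) : ℂ)‖^2 : ℝ) : ℂ) := by
    rw [← b.sum_inner_mul_inner v (T v)]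
    push_cast
    refine Finset.sum_congr rfl fun i _ => ?_
    have h1 : (inner ℂ (b i) (T v) : ℂ) = (lam i : ℂ) * inner ℂ (b i) v := by
      rw [← hT (b i) v, hbi i, inner_smul_left]
      simp
    rw [h1, mul_comm ((lam i : ℂ)) _, ← mul_assoc, hmc i]
    push_cast
    ring
  have hsum : ∑ i, ‖(inner ℂ v (b i) : ℂ)‖^2 = 1 := by
    have h2 := b.sum_inner_mul_inner v v
    simp_rw [hmc] at h2
    rw [inner_self_eq_norm_sq_to_K, hv] at h2
    norm_num at h2
    exact_mod_cast h2
  rw [key, Complex.ofReal_re]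
  calc ε = ∑ i, ε * ‖(inner ℂ v (b i) : ℂ)‖^2 := by rw [← Finset.mul_sum, hsum, mul_one]
    _ ≤ ∑ i, lam i * ‖(inner ℂ v (b i) : ℂ)‖^2 :=
      Finset.sum_le_sum fun i _ => mul_le_mul_of_nonneg_right (hεlam i) (sq_nonneg _)


set_option maxHeartbeats 1000000

/-- Robustness of the ground state to truncation: fidelity and trace-distance bounds
between the ground state `ψ₀` of `H` and the ground state `ψ₀'` of the compression `H'`
of `H` to the range of the orthogonal projection onto `V`. -/
theorem truncated_ground_state_fidelity
    {E : Type*} [NormedAddCommGroup E] [InnerProductSpace ℂ E] [FiniteDimensional ℂ E]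
    (H : E →ₗ[ℂ] E) (hH : H.IsSymmetric)
    (ψ₀ : E) (ε₀ Δ : ℝ) (hψ₀ : ‖ψ₀‖ = 1) (heig : H ψ₀ = (ε₀ : ℂ) • ψ₀)
    (hΔ : 0 < Δ)
    (hmin : ∀ v : E, ‖v‖ = 1 → ε₀ ≤ (inner ℂ v (H v) : ℂ).re)
    (hother : ∀ v : E, ‖v‖ = 1 → (inner ℂ ψ₀ v : ℂ) = 0 → ε₀ + Δ ≤ (inner ℂ v (H v) : ℂ).re)
    (V : Submodule ℂ E)
    (H' : V →ₗ[ℂ] V) (hH' : ∀ v : V, (H' v : E) = (Submodule.orthogonalProjection V (H v) : E))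
    (ψ₀' : V) (ε₀' : ℝ) (hψ₀' : ‖ψ₀'‖ = 1) (heig' : H' ψ₀' = (ε₀' : ℂ) • ψ₀')
    (hleast : IsLeast {r : ℝ | ∃ v : V, ‖v‖ = 1 ∧ H' v = (r : ℂ) • v} ε₀')
    (δ₁ δ₂ : ℝ)
    (hδ₁ : δ₁ = ‖ψ₀ - (Submodule.orthogonalProjection V ψ₀ : E)‖)
    (hδ₂ : δ₂ = ‖(Submodule.orthogonalProjection V (H (ψ₀ - (Submodule.orthogonalProjection V ψ₀ : E))) : E)‖)
    (hδ₁lt : δ₁ < 1) :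
    1 - 2 * δ₂ / (Δ * (1 - δ₁ ^ 2)) ≤ ‖(inner ℂ ((ψ₀' : E)) ψ₀ : ℂ)‖ ^ 2 ∧
    Real.sqrt (1 - ‖(inner ℂ ((ψ₀' : E)) ψ₀ : ℂ)‖ ^ 2) ≤
      Real.sqrt (2 * δ₂ / (Δ * (1 - δ₁ ^ 2))) := by
  have hδ₁0 : 0 ≤ δ₁ := hδ₁ ▸ norm_nonneg _
  have hδ₂0 : 0 ≤ δ₂ := hδ₂ ▸ norm_nonneg _
  have hgap : 0 < 1 - δ₁ ^ 2 := by nlinarith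
  -- H' as true map
  have hH'' : ∀ v : V, H' v = Submodule.orthogonalProjection V (H (v : E)) :=
    fun v => Subtype.ext (hH' v)
  -- H' is symmetric
  have hT' : H'.IsSymmetric := by
    intro x y
    have h1 : (inner ℂ x (H' y) : ℂ) = inner ℂ (x : E) (H (y : E)) := by
      rw [hH'' y, Submodule.inner_orthogonalProjection_eq_of_mem_left]
    have h2 : (inner ℂ (H' x) y : ℂ) = inner ℂ (x : E) (H (y : E)) := by
      rw [← inner_conj_symm, hH'' x, Submodule.inner_orthogonalProjection_eq_of_mem_left,
        ← hH, inner_conj_symm]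
    rw [h1, h2]
  -- set up the projected ground state
  set u : V := Submodule.orthogonalProjection V ψ₀ with hu
  set w₀ : E := ψ₀ - (u : E) with hw₀
  have hw₀mem : w₀ ∈ Vᗮ := V.sub_starProjection_mem_orthogonal ψ₀
  have huw₀ : (inner ℂ ((u : E)) w₀ : ℂ) = 0 :=
    Submodule.inner_right_of_mem_orthogonal u.2 hw₀mem
  set a : ℝ := ‖(u : E)‖ with ha
  have ha2 : a ^ 2 = 1 - δ₁ ^ 2 := by
    have hdec : ψ₀ = (u : E) + w₀ := by simp [hw₀]
    have h := norm_add_sq_eq_norm_sq_add_norm_sq_of_inner_eq_zero _ _ huw₀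
    rw [← hdec, hψ₀, ← ha, ← hδ₁] at h
    norm_num at h
    linarith
  have ha0 : 0 < a := by
    have h := norm_nonneg ((u : E))
    rw [← ha] at h
    nlinarith
  have ha1 : a ≤ 1 := by nlinarith
  have hun : ‖u‖ = a := by rw [Submodule.coe_norm]
  -- Step A : ε₀' ≤ ε₀ + δ₂ / (1 - δ₁ ^ 2)
  have stepA : ε₀' ≤ ε₀ + δ₂ / (1 - δ₁ ^ 2) := by
    set v : V := ((a⁻¹ : ℝ) : ℂ) • u with hv
    have hvnorm : ‖v‖ = 1 := by
      rw [hv, norm_smul, hun, Complex.norm_real, Real.norm_eq_abs,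
        abs_of_pos (inv_pos.mpr ha0), inv_mul_cancel₀ ha0.ne']
    have ray := min_eig_le_rayleigh H' hT' ε₀' hleast v hvnorm
    have hvHv : (inner ℂ v (H' v) : ℂ).re = a⁻¹ * a⁻¹ * (inner ℂ u (H' u) : ℂ).re := by
      rw [hv, map_smul, inner_smul_left, inner_smul_right, Complex.conj_ofReal,
        ← mul_assoc, ← Complex.ofReal_mul, Complex.re_ofReal_mul]
    have h1 : (inner ℂ u (H' u) : ℂ) = inner ℂ ((u : E)) (H (u : E)) := by
      rw [hH'' u, Submodule.inner_orthogonalProjection_eq_of_mem_left]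
    have hcoe : (u : E) = ψ₀ - w₀ := by rw [hw₀]; abel
    have h2 : (inner ℂ ((u : E)) (H ψ₀) : ℂ) = (ε₀ : ℂ) * ((a : ℂ) ^ 2) := by
      rw [heig, inner_smul_right]
      congr 1
      have hdec : ψ₀ = (u : E) + w₀ := by simp [hw₀]
      rw [hdec, inner_add_right, huw₀, add_zero, inner_self_eq_norm_sq_to_K, ← ha]
      norm_cast
    have h3 : (inner ℂ ((u : E)) (H w₀) : ℂ) = inner ℂ u (Submodule.orthogonalProjection V (H w₀)) := by
      rw [Submodule.inner_orthogonalProjection_eq_of_mem_left]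
    have h4 : |(inner ℂ u (Submodule.orthogonalProjection V (H w₀)) : ℂ).re| ≤ a * δ₂ := by
      have hnn := norm_inner_le_norm (𝕜 := ℂ) u (Submodule.orthogonalProjection V (H w₀))
      have hn2 : ‖Submodule.orthogonalProjection V (H w₀)‖ = δ₂ := by
        rw [Submodule.coe_norm, ← hδ₂]
      rw [hun, hn2] at hnn
      calc |(inner ℂ u (Submodule.orthogonalProjection V (H w₀)) : ℂ).re|
          ≤ ‖(inner ℂ u (Submodule.orthogonalProjection V (H w₀)) : ℂ)‖ := Complex.abs_re_le_norm _
        _ ≤ a * δ₂ := hnn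
    have hX : (inner ℂ u (H' u) : ℂ).re ≤ ε₀ * a ^ 2 + a * δ₂ := by
      have hsplit : (inner ℂ u (H' u) : ℂ) =
          (ε₀ : ℂ) * ((a : ℂ) ^ 2) - inner ℂ u (Submodule.orthogonalProjection V (H w₀)) := by
        rw [h1, show H ((u : E)) = H ψ₀ - H w₀ by rw [hcoe, map_sub],
          inner_sub_right, h2, h3]
      rw [hsplit]
      have : ((ε₀ : ℂ) * ((a : ℂ) ^ 2)).re = ε₀ * a ^ 2 := by
        norm_cast
      rw [Complex.sub_re, this]
      have := abs_le.mp h4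
      linarith [this.1]
    have hub : ε₀' ≤ a⁻¹ * a⁻¹ * (ε₀ * a ^ 2 + a * δ₂) := by
      rw [hvHv] at ray
      exact le_trans ray (mul_le_mul_of_nonneg_left hX (by positivity))
    have heq : a⁻¹ * a⁻¹ * (ε₀ * a ^ 2 + a * δ₂) = ε₀ + δ₂ / a := by
      field_simp
    have hdiv : δ₂ / a ≤ δ₂ / (1 - δ₁ ^ 2) := by
      apply div_le_div_of_nonneg_left hδ₂0 hgap
      nlinarith
    rw [heq] at hub
    linarith
  -- Step B : overlap decomposition
  set φ : E := (ψ₀' : E) with hφdef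
  have hφ : ‖φ‖ = 1 := by rw [hφdef, ← Submodule.coe_norm, hψ₀']
  set c : ℂ := inner ℂ ψ₀ φ with hc
  set w : E := φ - c • ψ₀ with hwdef
  have hψψ : (inner ℂ ψ₀ ψ₀ : ℂ) = 1 := by
    rw [inner_self_eq_norm_sq_to_K, hψ₀]; norm_num
  have hw0 : (inner ℂ ψ₀ w : ℂ) = 0 := by
    rw [hwdef, inner_sub_right, inner_smul_right, hψψ, mul_one, ← hc, sub_self]
  have hdec : φ = c • ψ₀ + w := by rw [hwdef]; abel
  have hwnorm : ‖c‖ ^ 2 + ‖w‖ ^ 2 = 1 := by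
    have hcw : (inner ℂ (c • ψ₀) w : ℂ) = 0 := by rw [inner_smul_left, hw0, mul_zero]
    have h := norm_add_sq_eq_norm_sq_add_norm_sq_of_inner_eq_zero _ _ hcw
    rw [← hdec, hφ, norm_smul, hψ₀, mul_one] at h
    norm_num at h
    nlinarith [h]
  have hray : (inner ℂ φ (H φ) : ℂ).re = ε₀' := by
    have h1 : (inner ℂ φ (H φ) : ℂ) = inner ℂ ψ₀' (H' ψ₀') := by
      rw [hH'' ψ₀', Submodule.inner_orthogonalProjection_eq_of_mem_left]
    rw [h1, heig', inner_smul_right, inner_self_eq_norm_sq_to_K, hψ₀']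
    norm_num
  have hsplitφ : (inner ℂ φ (H φ) : ℂ).re = ‖c‖ ^ 2 * ε₀ + (inner ℂ w (H w) : ℂ).re := by
    have t1 : (inner ℂ (c • ψ₀) (H (c • ψ₀)) : ℂ) = ((‖c‖ : ℂ) ^ 2) * (ε₀ : ℂ) := by
      rw [map_smul, inner_smul_left, inner_smul_right, heig, inner_smul_right, hψψ, mul_one]
      rw [show (starRingEnd ℂ) c * (c * (ε₀ : ℂ)) = c * (starRingEnd ℂ) c * (ε₀ : ℂ) by ring,
        Complex.mul_conj]
      norm_cast
      simp [← Complex.sq_norm]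
    have t2 : (inner ℂ (c • ψ₀) (H w) : ℂ) = 0 := by
      rw [inner_smul_left, ← hH ψ₀ w, heig, inner_smul_left, hw0, mul_zero, mul_zero]
    have t3 : (inner ℂ w (H (c • ψ₀)) : ℂ) = 0 := by
      rw [map_smul, inner_smul_right, heig, inner_smul_right, ← inner_conj_symm, hw0,
        map_zero, mul_zero, mul_zero]
    have hmain : (inner ℂ φ (H φ) : ℂ) = ((‖c‖ : ℂ) ^ 2) * (ε₀ : ℂ) + inner ℂ w (H w) := by
      conv_lhs => rw [hdec]
      rw [map_add, inner_add_left, inner_add_right, inner_add_right, t1, t2, t3]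
      ring
    rw [hmain, Complex.add_re]
    congr 1
    norm_cast
  have hfinal : Δ * (1 - ‖c‖ ^ 2) ≤ δ₂ / (1 - δ₁ ^ 2) := by
    rcases eq_or_ne w 0 with hw | hw
    · have hcn : ‖c‖ ^ 2 = 1 := by rw [hw] at hwnorm; simpa using hwnorm
      rw [hcn]
      simp only [sub_self, mul_zero]
      positivity
    · have hwn : 0 < ‖w‖ := norm_pos_iff.mpr hw
      have hwu : ‖((‖w‖⁻¹ : ℝ) : ℂ) • w‖ = 1 := by
        rw [norm_smul, Complex.norm_real, Real.norm_eq_abs,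
          abs_of_pos (inv_pos.mpr hwn), inv_mul_cancel₀ hwn.ne']
      have hwo : (inner ℂ ψ₀ (((‖w‖⁻¹ : ℝ) : ℂ) • w) : ℂ) = 0 := by
        rw [inner_smul_right, hw0, mul_zero]
      have hb := hother _ hwu hwo
      have hexp : (inner ℂ (((‖w‖⁻¹ : ℝ) : ℂ) • w) (H (((‖w‖⁻¹ : ℝ) : ℂ) • w)) : ℂ).re
          = ‖w‖⁻¹ * ‖w‖⁻¹ * (inner ℂ w (H w) : ℂ).re := by
        rw [map_smul, inner_smul_left, inner_smul_right, Complex.conj_ofReal,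
          ← mul_assoc, ← Complex.ofReal_mul, Complex.re_ofReal_mul]
      rw [hexp] at hb
      have hwHw : (ε₀ + Δ) * ‖w‖ ^ 2 ≤ (inner ℂ w (H w) : ℂ).re := by
        have h1 : (ε₀ + Δ) * ‖w‖ ^ 2 ≤ (‖w‖⁻¹ * ‖w‖⁻¹ * (inner ℂ w (H w) : ℂ).re) * ‖w‖ ^ 2 :=
          mul_le_mul_of_nonneg_right hb (by positivity)
        calc (ε₀ + Δ) * ‖w‖ ^ 2 ≤ _ := h1
          _ = (inner ℂ w (H w) : ℂ).re := by
            rw [show ‖w‖⁻¹ * ‖w‖⁻¹ * (inner ℂ w (H w) : ℂ).re * ‖w‖ ^ 2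
                = (inner ℂ w (H w) : ℂ).re * ((‖w‖ * ‖w‖⁻¹) * (‖w‖ * ‖w‖⁻¹)) by ring,
              mul_inv_cancel₀ hwn.ne', mul_one, mul_one]
      have hlow : ε₀ + Δ * (1 - ‖c‖ ^ 2) ≤ ε₀' := by
        have h2 := hray
        rw [hsplitφ] at h2
        have hsub : ‖w‖ ^ 2 = 1 - ‖c‖ ^ 2 := by linarith
        rw [hsub] at hwHw
        calc ε₀ + Δ * (1 - ‖c‖ ^ 2) = ‖c‖ ^ 2 * ε₀ + (ε₀ + Δ) * (1 - ‖c‖ ^ 2) := by ring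
          _ ≤ ‖c‖ ^ 2 * ε₀ + (inner ℂ w (H w) : ℂ).re := by linarith
          _ = ε₀' := h2
      linarith
  have hkey : 1 - ‖(inner ℂ φ ψ₀ : ℂ)‖ ^ 2 ≤ 2 * δ₂ / (Δ * (1 - δ₁ ^ 2)) := by
    have hcc : ‖(inner ℂ φ ψ₀ : ℂ)‖ = ‖c‖ := by rw [hc]; exact norm_inner_symm _ _
    rw [hcc, le_div_iff₀ (by positivity)]
    nlinarith [mul_le_mul_of_nonneg_right hfinal (le_of_lt hgap),
      div_mul_cancel₀ δ₂ hgap.ne']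
  constructor
  · linarith
  · exact Real.sqrt_le_sqrt (by linarith)
end

section
/- Let H = H_A ⊗ I + H_{AB} + I ⊗ H_B be a Hermitian operator on a finite-dimensional bipartite Hilbert space H_A ⊗ H_B, where H_A acts only on A, H_B only on B, and H_{AB} is Hermitian with −(K_A ⊗ I) ≤ H_{AB} ≤ K_A ⊗ I for some Hermitian K_A on A. Let Ψ be a unit vector minimizing ⟨Ψ|H|Ψ⟩ (a ground state of H). Then for every unit vector Ψ_A ∈ H_A, ⟨Ψ|(H_A − K_A) ⊗ I|Ψ⟩ ≤ ⟨Ψ_A|(H_A + K_A)|Ψ_A⟩. -/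
open Matrix Kronecker ComplexOrder


private lemma kron_mulVec_prod {m n : ℕ} (A : Matrix (Fin m) (Fin m) ℂ)
    (B : Matrix (Fin n) (Fin n) ℂ) (x : Fin m → ℂ) (y : Fin n → ℂ) :
    (A ⊗ₖ B).mulVec (fun p => x p.1 * y p.2) =
      fun p => (A.mulVec x p.1) * (B.mulVec y p.2) := by
  funext p
  simp only [mulVec, dotProduct, kroneckerMap_apply, Fintype.sum_prod_type,
    Finset.sum_mul, Finset.mul_sum]
  rw [Finset.sum_comm]
  exact Finset.sum_congr rfl fun k _ => Finset.sum_congr rfl fun l _ => by ring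

private lemma dot_prod_split {m n : ℕ} (x u : Fin m → ℂ) (y v : Fin n → ℂ) :
    star (fun p : Fin m × Fin n => x p.1 * y p.2) ⬝ᵥ (fun p => u p.1 * v p.2) =
      (star x ⬝ᵥ u) * (star y ⬝ᵥ v) := by
  simp only [dotProduct, Pi.star_apply, star_mul', Fintype.sum_prod_type,
    Finset.sum_mul, Finset.mul_sum]
  rw [Finset.sum_comm]
  exact Finset.sum_congr rfl fun k _ => Finset.sum_congr rfl fun l _ => by ring

private lemma kron_quad {m n : ℕ} (A : Matrix (Fin m) (Fin m) ℂ)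
    (B : Matrix (Fin n) (Fin n) ℂ) (x : Fin m → ℂ) (y : Fin n → ℂ) :
    star (fun p : Fin m × Fin n => x p.1 * y p.2) ⬝ᵥ
        ((A ⊗ₖ B).mulVec (fun p => x p.1 * y p.2)) =
      (star x ⬝ᵥ A.mulVec x) * (star y ⬝ᵥ B.mulVec y) := by
  rw [kron_mulVec_prod, dot_prod_split]

private lemma conjTranspose_kron {m n : ℕ} (A : Matrix (Fin m) (Fin m) ℂ)
    (B : Matrix (Fin n) (Fin n) ℂ) : (A ⊗ₖ B)ᴴ = Aᴴ ⊗ₖ Bᴴ := by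
  ext ⟨i, j⟩ ⟨k, l⟩
  simp [conjTranspose_apply, kroneckerMap_apply, star_mul']

private lemma one_kron_psd {m n : ℕ} (P : Matrix (Fin n) (Fin n) ℂ)
    (hP : P.PosSemidef) :
    ((1 : Matrix (Fin m) (Fin m) ℂ) ⊗ₖ P).PosSemidef := by
  exact PosSemidef.one.kronecker hP

private lemma sub_kron_one {m n : ℕ} (A A' : Matrix (Fin m) (Fin m) ℂ)
    (B : Matrix (Fin n) (Fin n) ℂ) :
    (A - A') ⊗ₖ B = A ⊗ₖ B - A' ⊗ₖ B := by
  ext ⟨i, j⟩ ⟨k, l⟩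
  simp [kroneckerMap_apply, sub_mul]

private lemma kron_sub {m n : ℕ} (A : Matrix (Fin m) (Fin m) ℂ)
    (B B' : Matrix (Fin n) (Fin n) ℂ) :
    A ⊗ₖ (B - B') = A ⊗ₖ B - A ⊗ₖ B' := by
  ext ⟨i, j⟩ ⟨k, l⟩
  simp [kroneckerMap_apply, mul_sub]

/-- If `E` is the minimum eigenvalue of Hermitian `HB`, then `HB - E • 1` is PSD. -/
private lemma sub_min_eig_psd {n : ℕ} (HB : Matrix (Fin n) (Fin n) ℂ)
    (hHB : HB.IsHermitian) (E : ℝ) (hE : ∀ i, E ≤ hHB.eigenvalues i) :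
    (HB - (E : ℂ) • 1).PosSemidef := by
  have hU := (Matrix.mem_unitaryGroup_iff).mp (hHB.eigenvectorUnitary).2
  set U := (hHB.eigenvectorUnitary : Matrix (Fin n) (Fin n) ℂ) with hUdef
  rw [star_eq_conjTranspose] at hU
  have key : HB - (E : ℂ) • 1 =
      U * diagonal (fun i => ((hHB.eigenvalues i - E : ℝ) : ℂ)) * Uᴴ := by
    have h1 : (E : ℂ) • (1 : Matrix (Fin n) (Fin n) ℂ) = U * ((E : ℂ) • 1) * Uᴴ := by
      rw [Matrix.mul_smul, mul_one, Matrix.smul_mul, hU]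
    have h2 : diagonal (RCLike.ofReal ∘ hHB.eigenvalues) -
        (E : ℂ) • (1 : Matrix (Fin n) (Fin n) ℂ) =
        diagonal (fun i => ((hHB.eigenvalues i - E : ℝ) : ℂ)) := by
      rw [smul_one_eq_diagonal, diagonal_sub]
      ext i j
      rcases eq_or_ne i j with rfl | hij
      · simp only [diagonal_apply_eq, Function.comp_apply]
        exact (Complex.ofReal_sub _ _).symm
      · simp [diagonal_apply_ne _ hij]
    have h1' : (E : ℂ) • (1 : Matrix (Fin n) (Fin n) ℂ) =
        U * ((E : ℂ) • 1) * star U := by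
      rw [star_eq_conjTranspose]; exact h1
    rw [← h2, mul_sub, sub_mul,
      show U * diagonal (RCLike.ofReal ∘ hHB.eigenvalues) * Uᴴ = HB by
        rw [← star_eq_conjTranspose]; exact hHB.spectral_theorem.symm,
      ← h1]
  rw [key]
  refine (posSemidef_diagonal_iff.mpr fun i => ?_).mul_mul_conjTranspose_same U
  exact Complex.zero_le_real.mpr (by linarith [hE i])

open Matrix Kronecker ComplexOrder in
/-- Bipartite variational bound: for `H = H_A ⊗ I + H_{AB} + I ⊗ H_B` with
`−K_A ⊗ I ≤ H_{AB} ≤ K_A ⊗ I` in the Loewner order, and `Ψ` a unit-norm ground state of `H`,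
one has `⟨Ψ|(H_A − K_A) ⊗ I|Ψ⟩ ≤ ⟨Ψ_A|(H_A + K_A)|Ψ_A⟩` for every unit vector `Ψ_A`. -/
theorem bipartite_variational_bound {m n : ℕ}
    (HA KA : Matrix (Fin m) (Fin m) ℂ) (HB : Matrix (Fin n) (Fin n) ℂ)
    (HAB : Matrix (Fin m × Fin n) (Fin m × Fin n) ℂ)
    (hHA : HA.IsHermitian) (hKA : KA.IsHermitian) (hHB : HB.IsHermitian)
    (hHAB : HAB.IsHermitian)
    (hub : (KA ⊗ₖ (1 : Matrix (Fin n) (Fin n) ℂ) - HAB).PosSemidef)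
    (hlb : (HAB + KA ⊗ₖ (1 : Matrix (Fin n) (Fin n) ℂ)).PosSemidef)
    (H : Matrix (Fin m × Fin n) (Fin m × Fin n) ℂ)
    (hH : H = HA ⊗ₖ (1 : Matrix (Fin n) (Fin n) ℂ) + HAB
        + (1 : Matrix (Fin m) (Fin m) ℂ) ⊗ₖ HB)
    (Ψ : Fin m × Fin n → ℂ) (hΨ : star Ψ ⬝ᵥ Ψ = 1)
    (hground : ∀ Φ : Fin m × Fin n → ℂ, star Φ ⬝ᵥ Φ = 1 →
      (star Ψ ⬝ᵥ H.mulVec Ψ).re ≤ (star Φ ⬝ᵥ H.mulVec Φ).re) :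
    ∀ ΨA : Fin m → ℂ, star ΨA ⬝ᵥ ΨA = 1 →
      (star Ψ ⬝ᵥ (((HA - KA) ⊗ₖ (1 : Matrix (Fin n) (Fin n) ℂ)).mulVec Ψ)).re ≤
        (star ΨA ⬝ᵥ ((HA + KA).mulVec ΨA)).re := by
  intro ΨA hΨA
  subst hH
  rcases Nat.eq_zero_or_pos n with hn0 | hn
  · exfalso
    subst hn0
    simp [dotProduct] at hΨ
  have hne : Nonempty (Fin n) := ⟨⟨0, hn⟩⟩
  obtain ⟨i₀, -, hmin⟩ := Finset.exists_min_image (Finset.univ : Finset (Fin n))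
    hHB.eigenvalues Finset.univ_nonempty
  set E : ℝ := hHB.eigenvalues i₀ with hEdef
  set ΨB : Fin n → ℂ := ⇑(hHB.eigenvectorBasis i₀) with hΨBdef
  have hB1 : star ΨB ⬝ᵥ ΨB = 1 := by
    have h := hHB.eigenvectorBasis.orthonormal.1 i₀
    have h2 : (star ΨB ⬝ᵥ ΨB) =
        (inner ℂ (hHB.eigenvectorBasis i₀) (hHB.eigenvectorBasis i₀) : ℂ) := by
      rw [EuclideanSpace.inner_eq_star_dotProduct]; exact dotProduct_comm _ _
    rw [h2, inner_self_eq_norm_sq_to_K, h]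
    norm_num
  have hBE : star ΨB ⬝ᵥ HB.mulVec ΨB = (E : ℂ) := by
    rw [show HB.mulVec ΨB = E • ΨB from hHB.mulVec_eigenvectorBasis i₀,
      dotProduct_smul, hB1]
    simp [Complex.real_smul]
  set Φ : Fin m × Fin n → ℂ := fun p => ΨA p.1 * ΨB p.2 with hΦdef
  have hΦ1 : star Φ ⬝ᵥ Φ = 1 := by
    have h := kron_quad (1 : Matrix (Fin m) (Fin m) ℂ)
      (1 : Matrix (Fin n) (Fin n) ℂ) ΨA ΨB
    rw [one_kronecker_one] at h
    simpa [one_mulVec, hΨA, hB1] using h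
  have cA : star Φ ⬝ᵥ ((HA ⊗ₖ (1 : Matrix (Fin n) (Fin n) ℂ)).mulVec Φ) =
      star ΨA ⬝ᵥ HA.mulVec ΨA := by
    rw [hΦdef, kron_quad]
    simp [one_mulVec, hB1]
  have cK : star Φ ⬝ᵥ ((KA ⊗ₖ (1 : Matrix (Fin n) (Fin n) ℂ)).mulVec Φ) =
      star ΨA ⬝ᵥ KA.mulVec ΨA := by
    rw [hΦdef, kron_quad]
    simp [one_mulVec, hB1]
  have cB : star Φ ⬝ᵥ (((1 : Matrix (Fin m) (Fin m) ℂ) ⊗ₖ HB).mulVec Φ) = (E : ℂ) := by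
    rw [hΦdef, kron_quad]
    simp [one_mulVec, hΨA, hBE]
  have hABΦ : (star Φ ⬝ᵥ HAB.mulVec Φ).re ≤ (star ΨA ⬝ᵥ KA.mulVec ΨA).re := by
    have h := hub.re_dotProduct_nonneg Φ
    rw [sub_mulVec, dotProduct_sub, map_sub, cK] at h
    simp only [RCLike.re_to_complex] at h
    linarith
  have hABΨ : -(star Ψ ⬝ᵥ ((KA ⊗ₖ (1 : Matrix (Fin n) (Fin n) ℂ)).mulVec Ψ)).re ≤
      (star Ψ ⬝ᵥ HAB.mulVec Ψ).re := by
    have h := hlb.re_dotProduct_nonneg Ψ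
    rw [add_mulVec, dotProduct_add, map_add] at h
    simp only [RCLike.re_to_complex] at h
    linarith
  have hBΨ : E ≤ (star Ψ ⬝ᵥ (((1 : Matrix (Fin m) (Fin m) ℂ) ⊗ₖ HB).mulVec Ψ)).re := by
    have hpsd := one_kron_psd (m := m) (HB - (E : ℂ) • 1)
      (sub_min_eig_psd HB hHB E (fun i => hmin i (Finset.mem_univ i)))
    have h := hpsd.re_dotProduct_nonneg Ψ
    rw [kron_sub, kronecker_smul, one_kronecker_one, sub_mulVec, dotProduct_sub,
      map_sub, smul_mulVec, one_mulVec, dotProduct_smul, hΨ, smul_eq_mul,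
      mul_one] at h
    simp only [RCLike.re_to_complex, Complex.ofReal_re] at h
    linarith
  have hground' := hground Φ hΦ1
  have expΨ : (star Ψ ⬝ᵥ ((HA ⊗ₖ (1 : Matrix (Fin n) (Fin n) ℂ) + HAB
      + (1 : Matrix (Fin m) (Fin m) ℂ) ⊗ₖ HB).mulVec Ψ)).re =
      (star Ψ ⬝ᵥ ((HA ⊗ₖ (1 : Matrix (Fin n) (Fin n) ℂ)).mulVec Ψ)).re
      + (star Ψ ⬝ᵥ HAB.mulVec Ψ).re
      + (star Ψ ⬝ᵥ (((1 : Matrix (Fin m) (Fin m) ℂ) ⊗ₖ HB).mulVec Ψ)).re := by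
    simp [add_mulVec, dotProduct_add]
  have expΦ : (star Φ ⬝ᵥ ((HA ⊗ₖ (1 : Matrix (Fin n) (Fin n) ℂ) + HAB
      + (1 : Matrix (Fin m) (Fin m) ℂ) ⊗ₖ HB).mulVec Φ)).re =
      (star ΨA ⬝ᵥ HA.mulVec ΨA).re + (star Φ ⬝ᵥ HAB.mulVec Φ).re + E := by
    simp [add_mulVec, dotProduct_add, cA, cB]
  have hsub : (star Ψ ⬝ᵥ (((HA - KA) ⊗ₖ (1 : Matrix (Fin n) (Fin n) ℂ)).mulVec Ψ)).re =
      (star Ψ ⬝ᵥ ((HA ⊗ₖ (1 : Matrix (Fin n) (Fin n) ℂ)).mulVec Ψ)).re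
      - (star Ψ ⬝ᵥ ((KA ⊗ₖ (1 : Matrix (Fin n) (Fin n) ℂ)).mulVec Ψ)).re := by
    rw [sub_kron_one, sub_mulVec, dotProduct_sub]
    simp
  have htarget : (star ΨA ⬝ᵥ ((HA + KA).mulVec ΨA)).re =
      (star ΨA ⬝ᵥ HA.mulVec ΨA).re + (star ΨA ⬝ᵥ KA.mulVec ΨA).re := by
    simp [add_mulVec, dotProduct_add]
  rw [expΨ, expΦ] at hground'
  rw [hsub, htarget]
  linarith
end

section
/- Under the hypotheses of the previous statement, let Ξ be a Hermitian operator on H_A and L : ℝ≥0 → ℝ a convex nondecreasing function with L(x) → ∞ as x → ∞, such that H_A − K_A ≥ L(|Ξ|) in the operator order (where L(|Ξ|) is defined by functional calculus on |Ξ| = √(Ξ²)). Then the ground state Ψ of H satisfies L(⟨Ψ| |Ξ| ⊗ I |Ψ⟩) ≤ ⟨Ψ_A|(H_A + K_A)|Ψ_A⟩ for every unit Ψ_A ∈ H_A; in particular ⟨Ψ| |Ξ|⊗I |Ψ⟩ ≤ L⁻¹(min over unit Ψ_A of ⟨Ψ_A|(H_A+K_A)|Ψ_A⟩). -/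
open Matrix Kronecker ComplexOrder

lemma conj_quad {ι : Type*} [Fintype ι] [DecidableEq ι]
    (W : Matrix ι ι ℂ) (c : ι → ℝ) (x : ι → ℂ) :
    star x ⬝ᵥ (W * Matrix.diagonal (fun i => (c i : ℂ)) * Wᴴ).mulVec x
      = ((∑ i, c i * Complex.normSq ((Wᴴ.mulVec x) i) : ℝ) : ℂ) := by
  have h1 : (W * Matrix.diagonal (fun i => (c i : ℂ)) * Wᴴ).mulVec x
      = W.mulVec ((Matrix.diagonal fun i => (c i : ℂ)).mulVec (Wᴴ.mulVec x)) := by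
    rw [Matrix.mulVec_mulVec, Matrix.mulVec_mulVec]
  have h2 : star x ᵥ* W = star (Wᴴ.mulVec x) := by
    rw [Matrix.star_mulVec, Matrix.conjTranspose_conjTranspose]
  rw [h1, Matrix.dotProduct_mulVec, h2]
  simp only [dotProduct, Matrix.mulVec_diagonal, Pi.star_apply, Complex.ofReal_sum]
  refine Finset.sum_congr rfl fun i _ => ?_
  simp only [Complex.star_def]
  rw [Complex.ofReal_mul, Complex.normSq_eq_conj_mul_self]
  ring

lemma kron_conjT {m n : Type*} [Fintype m] [Fintype n]
    (A : Matrix m m ℂ) (B : Matrix n n ℂ) : (A ⊗ₖ B)ᴴ = Aᴴ ⊗ₖ Bᴴ := by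
  ext p q
  simp [Matrix.conjTranspose_apply, Matrix.kroneckerMap_apply, mul_comm]

lemma kron_mulVec {m n : Type*} [Fintype m] [Fintype n]
    (M : Matrix m m ℂ) (N : Matrix n n ℂ) (x : m → ℂ) (y : n → ℂ) :
    (M ⊗ₖ N).mulVec (fun p => x p.1 * y p.2)
      = fun p => M.mulVec x p.1 * N.mulVec y p.2 := by
  funext p
  simp only [Matrix.mulVec, dotProduct, Matrix.kroneckerMap_apply]
  rw [Finset.sum_mul_sum, Fintype.sum_prod_type]
  refine Finset.sum_congr rfl fun k _ => Finset.sum_congr rfl fun l _ => ?_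
  ring

lemma dot_tens {m n : Type*} [Fintype m] [Fintype n]
    (x a : m → ℂ) (y b : n → ℂ) :
    star (fun p : m × n => x p.1 * y p.2) ⬝ᵥ (fun p => a p.1 * b p.2)
      = (star x ⬝ᵥ a) * (star y ⬝ᵥ b) := by
  simp only [dotProduct, Pi.star_apply]
  rw [Finset.sum_mul_sum, Fintype.sum_prod_type]
  refine Finset.sum_congr rfl fun k _ => Finset.sum_congr rfl fun l _ => ?_
  simp only [star_mul']
  ring

lemma psd_re {ι : Type*} [Fintype ι] {M : Matrix ι ι ℂ} (h : M.PosSemidef)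
    (x : ι → ℂ) : 0 ≤ (star x ⬝ᵥ M.mulVec x).re := by
  have := h.dotProduct_mulVec_nonneg x
  rw [Complex.le_def] at this
  simpa using this.1

lemma quad_add {ι : Type*} [Fintype ι] (M N : Matrix ι ι ℂ) (x : ι → ℂ) :
    star x ⬝ᵥ (M + N).mulVec x = star x ⬝ᵥ M.mulVec x + star x ⬝ᵥ N.mulVec x := by
  rw [Matrix.add_mulVec, dotProduct_add]

lemma quad_sub {ι : Type*} [Fintype ι] (M N : Matrix ι ι ℂ) (x : ι → ℂ) :
    star x ⬝ᵥ (M - N).mulVec x = star x ⬝ᵥ M.mulVec x - star x ⬝ᵥ N.mulVec x := by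
  rw [Matrix.sub_mulVec, dotProduct_sub]

lemma diag_kron_one {m n : Type*} [Fintype m] [Fintype n] [DecidableEq m] [DecidableEq n]
    (a : m → ℂ) :
    (Matrix.diagonal a) ⊗ₖ (1 : Matrix n n ℂ) = Matrix.diagonal (fun p : m × n => a p.1) := by
  rw [← Matrix.diagonal_one, Matrix.diagonal_kronecker_diagonal]
  simp

lemma one_kron_diag {m n : Type*} [Fintype m] [Fintype n] [DecidableEq m] [DecidableEq n]
    (b : n → ℂ) :
    (1 : Matrix m m ℂ) ⊗ₖ (Matrix.diagonal b) = Matrix.diagonal (fun p : m × n => b p.2) := by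
  rw [← Matrix.diagonal_one, Matrix.diagonal_kronecker_diagonal]
  simp

lemma conj_kron_one {m n : Type*} [Fintype m] [Fintype n] [DecidableEq m] [DecidableEq n]
    (U : Matrix m m ℂ) (c : m → ℝ) :
    (U * Matrix.diagonal (fun i => (c i : ℂ)) * Uᴴ) ⊗ₖ (1 : Matrix n n ℂ)
      = (U ⊗ₖ (1 : Matrix n n ℂ)) * Matrix.diagonal (fun p : m × n => (c p.1 : ℂ))
        * (U ⊗ₖ (1 : Matrix n n ℂ))ᴴ := by
  have e : Matrix.diagonal (fun p : m × n => (c p.1 : ℂ))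
      = (Matrix.diagonal fun i => (c i : ℂ)) ⊗ₖ (1 : Matrix n n ℂ) := (diag_kron_one (fun i => (c i : ℂ))).symm
  rw [kron_conjT, Matrix.conjTranspose_one, e,
    ← Matrix.mul_kronecker_mul, ← Matrix.mul_kronecker_mul]
  simp

lemma one_kron_conj {m n : Type*} [Fintype m] [Fintype n] [DecidableEq m] [DecidableEq n]
    (W : Matrix n n ℂ) (c : n → ℝ) :
    (1 : Matrix m m ℂ) ⊗ₖ (W * Matrix.diagonal (fun j => (c j : ℂ)) * Wᴴ)
      = ((1 : Matrix m m ℂ) ⊗ₖ W) * Matrix.diagonal (fun p : m × n => (c p.2 : ℂ))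
        * ((1 : Matrix m m ℂ) ⊗ₖ W)ᴴ := by
  have e : Matrix.diagonal (fun p : m × n => (c p.2 : ℂ))
      = (1 : Matrix m m ℂ) ⊗ₖ (Matrix.diagonal fun j => (c j : ℂ)) := (one_kron_diag (fun j => (c j : ℂ))).symm
  rw [kron_conjT, Matrix.conjTranspose_one, e,
    ← Matrix.mul_kronecker_mul, ← Matrix.mul_kronecker_mul]
  simp

lemma psd_kron_one {m n : Type*} [Fintype m] [Fintype n] [DecidableEq m] [DecidableEq n]
    {M : Matrix m m ℂ} (h : M.PosSemidef) : (M ⊗ₖ (1 : Matrix n n ℂ)).PosSemidef := by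
  obtain ⟨B, hB⟩ : ∃ B : Matrix m m ℂ, M = Bᴴ * B := by
    open scoped MatrixOrder in exact CStarAlgebra.nonneg_iff_eq_star_mul_self.mp h.nonneg
  have hM : M ⊗ₖ (1 : Matrix n n ℂ)
      = (B ⊗ₖ (1 : Matrix n n ℂ))ᴴ * (B ⊗ₖ (1 : Matrix n n ℂ)) := by
    rw [kron_conjT, Matrix.conjTranspose_one, ← Matrix.mul_kronecker_mul, ← hB, Matrix.one_mul]
  rw [hM]
  exact Matrix.posSemidef_conjTranspose_mul_self _


open Matrix Kronecker ComplexOrder in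
/-- Bipartite variational bound with functional calculus: under the hypotheses of the
variational lemma, if `Ξ = U diag(d) U†` is Hermitian on `H_A` with `|Ξ| = U diag(|d|) U†`,
`L` is convex, nondecreasing and unbounded on `[0,∞)`, and `H_A − K_A ≥ L(|Ξ|)` in the
Loewner order (with `L(|Ξ|) = U diag(L(|d|)) U†`), then the ground state `Ψ` of `H`
satisfies `L(⟨Ψ| |Ξ| ⊗ I |Ψ⟩) ≤ ⟨Ψ_A|(H_A + K_A)|Ψ_A⟩` for every unit `Ψ_A`. -/
theorem bipartite_quantum_number_bound {m n : ℕ}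
    (HA KA : Matrix (Fin m) (Fin m) ℂ) (HB : Matrix (Fin n) (Fin n) ℂ)
    (HAB : Matrix (Fin m × Fin n) (Fin m × Fin n) ℂ)
    (hHA : HA.IsHermitian) (hKA : KA.IsHermitian) (hHB : HB.IsHermitian)
    (hHAB : HAB.IsHermitian)
    (hub : (KA ⊗ₖ (1 : Matrix (Fin n) (Fin n) ℂ) - HAB).PosSemidef)
    (hlb : (HAB + KA ⊗ₖ (1 : Matrix (Fin n) (Fin n) ℂ)).PosSemidef)
    (H : Matrix (Fin m × Fin n) (Fin m × Fin n) ℂ)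
    (hH : H = HA ⊗ₖ (1 : Matrix (Fin n) (Fin n) ℂ) + HAB
        + (1 : Matrix (Fin m) (Fin m) ℂ) ⊗ₖ HB)
    (Ψ : Fin m × Fin n → ℂ) (hΨ : star Ψ ⬝ᵥ Ψ = 1)
    (hground : ∀ Φ : Fin m × Fin n → ℂ, star Φ ⬝ᵥ Φ = 1 →
      (star Ψ ⬝ᵥ H.mulVec Ψ).re ≤ (star Φ ⬝ᵥ H.mulVec Φ).re)
    -- the Hermitian operator Ξ and its functional calculus, via a unitary eigendecomposition
    (Ξ AbsΞ LAbsΞ : Matrix (Fin m) (Fin m) ℂ)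
    (U : Matrix (Fin m) (Fin m) ℂ) (hU : U ∈ Matrix.unitaryGroup (Fin m) ℂ)
    (d : Fin m → ℝ)
    (hΞ : Ξ = U * Matrix.diagonal (fun i => (d i : ℂ)) * star U)
    (hAbsΞ : AbsΞ = U * Matrix.diagonal (fun i => ((|d i| : ℝ) : ℂ)) * star U)
    (L : ℝ → ℝ) (hLconv : ConvexOn ℝ (Set.Ici 0) L) (hLmono : MonotoneOn L (Set.Ici 0))
    (hLunbdd : Filter.Tendsto L Filter.atTop Filter.atTop)
    (hLAbsΞ : LAbsΞ = U * Matrix.diagonal (fun i => (L |d i| : ℂ)) * star U)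
    (hdom : (HA - KA - LAbsΞ).PosSemidef) :
    ∀ ΨA : Fin m → ℂ, star ΨA ⬝ᵥ ΨA = 1 →
      L ((star Ψ ⬝ᵥ ((AbsΞ ⊗ₖ (1 : Matrix (Fin n) (Fin n) ℂ)).mulVec Ψ)).re) ≤
        (star ΨA ⬝ᵥ ((HA + KA).mulVec ΨA)).re := by
  intro ΨA hΨA
  -- n is nonempty
  have hn : Nonempty (Fin n) := by
    by_contra h
    rw [not_nonempty_iff] at h
    haveI : IsEmpty (Fin m × Fin n) := ⟨fun p => h.false p.2⟩
    rw [show star Ψ ⬝ᵥ Ψ = 0 by simp [dotProduct]] at hΨ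
    exact one_ne_zero hΨ.symm
  -- unitary facts
  have hUU : U * Uᴴ = 1 := by
    have := (Matrix.mem_unitaryGroup_iff).mp hU
    rwa [Matrix.star_eq_conjTranspose] at this
  -- the key quadratic-form computation on the A side
  set Φ : Fin m × Fin n → ℂ := ((U ⊗ₖ (1 : Matrix (Fin n) (Fin n) ℂ))ᴴ).mulVec Ψ with hΦ
  have key : ∀ c : Fin m → ℝ,
      star Ψ ⬝ᵥ (((U * Matrix.diagonal (fun i => (c i : ℂ)) * Uᴴ)
          ⊗ₖ (1 : Matrix (Fin n) (Fin n) ℂ)).mulVec Ψ)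
        = ((∑ p : Fin m × Fin n, c p.1 * Complex.normSq (Φ p) : ℝ) : ℂ) := by
    intro c
    rw [conj_kron_one]
    exact conj_quad (U ⊗ₖ (1 : Matrix (Fin n) (Fin n) ℂ)) (fun p => c p.1) Ψ
  -- normalization of the weights
  have hsum1 : ∑ p : Fin m × Fin n, Complex.normSq (Φ p) = 1 := by
    have h1 := key (fun _ => 1)
    simp only [Complex.ofReal_one, Matrix.diagonal_one, Matrix.mul_one, hUU,
      Matrix.one_kronecker_one, Matrix.one_mulVec, hΨ, one_mul] at h1
    have := h1.symm
    rw [Complex.ofReal_eq_one] at this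
    exact this
  -- the two quadratic forms as weighted sums
  have habsq : (star Ψ ⬝ᵥ ((AbsΞ ⊗ₖ (1 : Matrix (Fin n) (Fin n) ℂ)).mulVec Ψ)).re
      = ∑ p : Fin m × Fin n, |d p.1| * Complex.normSq (Φ p) := by
    rw [hAbsΞ, Matrix.star_eq_conjTranspose, key (fun i => |d i|), Complex.ofReal_re]
  have hLq : (star Ψ ⬝ᵥ ((LAbsΞ ⊗ₖ (1 : Matrix (Fin n) (Fin n) ℂ)).mulVec Ψ)).re
      = ∑ p : Fin m × Fin n, L |d p.1| * Complex.normSq (Φ p) := by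
    rw [hLAbsΞ, Matrix.star_eq_conjTranspose, key (fun i => L |d i|), Complex.ofReal_re]
  -- Jensen's inequality
  have hJensen : L ((star Ψ ⬝ᵥ ((AbsΞ ⊗ₖ (1 : Matrix (Fin n) (Fin n) ℂ)).mulVec Ψ)).re)
      ≤ (star Ψ ⬝ᵥ ((LAbsΞ ⊗ₖ (1 : Matrix (Fin n) (Fin n) ℂ)).mulVec Ψ)).re := by
    rw [habsq, hLq]
    have hj := hLconv.map_sum_le (t := Finset.univ)
      (w := fun p : Fin m × Fin n => Complex.normSq (Φ p))
      (p := fun p : Fin m × Fin n => |d p.1|)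
      (fun p _ => Complex.normSq_nonneg _) hsum1 (fun p _ => Set.mem_Ici.mpr (abs_nonneg _))
    calc L (∑ p : Fin m × Fin n, |d p.1| * Complex.normSq (Φ p))
        = L (∑ p : Fin m × Fin n, Complex.normSq (Φ p) • |d p.1|) := by
          congr 1
          exact Finset.sum_congr rfl fun p _ => by rw [smul_eq_mul, mul_comm]
      _ ≤ ∑ p : Fin m × Fin n, Complex.normSq (Φ p) • L |d p.1| := hj
      _ = ∑ p : Fin m × Fin n, L |d p.1| * Complex.normSq (Φ p) :=
          Finset.sum_congr rfl fun p _ => by rw [smul_eq_mul, mul_comm]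
  -- domination: L(|Ξ|) ⊗ 1 ≤ (HA − KA) ⊗ 1
  have hdom' : (star Ψ ⬝ᵥ ((LAbsΞ ⊗ₖ (1 : Matrix (Fin n) (Fin n) ℂ)).mulVec Ψ)).re
      ≤ (star Ψ ⬝ᵥ (((HA - KA) ⊗ₖ (1 : Matrix (Fin n) (Fin n) ℂ)).mulVec Ψ)).re := by
    have hpsd := psd_kron_one (n := Fin n) hdom
    have hps := psd_re hpsd Ψ
    have hsplit : (HA - KA - LAbsΞ) ⊗ₖ (1 : Matrix (Fin n) (Fin n) ℂ)
        = (HA - KA) ⊗ₖ (1 : Matrix (Fin n) (Fin n) ℂ)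
          - LAbsΞ ⊗ₖ (1 : Matrix (Fin n) (Fin n) ℂ) := by
      ext p q
      simp [Matrix.kroneckerMap_apply, sub_mul]
    rw [hsplit, quad_sub, Complex.sub_re] at hps
    linarith
  -- spectral decomposition of HB and its minimal eigenvalue
  set W : Matrix (Fin n) (Fin n) ℂ := (hHB.eigenvectorUnitary : Matrix (Fin n) (Fin n) ℂ) with hW
  set μ : Fin n → ℝ := hHB.eigenvalues with hμ
  have hWW : W * Wᴴ = 1 := by
    have := (Matrix.mem_unitaryGroup_iff).mp hHB.eigenvectorUnitary.2
    rwa [Matrix.star_eq_conjTranspose] at this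
  have hWW' : Wᴴ * W = 1 := by
    have := (Matrix.mem_unitaryGroup_iff').mp hHB.eigenvectorUnitary.2
    rwa [Matrix.star_eq_conjTranspose] at this
  have hspec : HB = W * Matrix.diagonal (fun j => (μ j : ℂ)) * Wᴴ := by
    have := hHB.spectral_theorem
    rw [Unitary.conjStarAlgAut_apply, Matrix.star_eq_conjTranspose] at this
    exact this
  obtain ⟨j0, -, hj0⟩ := Finset.exists_min_image (Finset.univ : Finset (Fin n)) μ
    Finset.univ_nonempty
  -- lower bound: ⟨Ψ| 1 ⊗ HB |Ψ⟩ ≥ μ j0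
  have hBlow : (μ j0 : ℝ)
      ≤ (star Ψ ⬝ᵥ (((1 : Matrix (Fin m) (Fin m) ℂ) ⊗ₖ HB).mulVec Ψ)).re := by
    set Φ' : Fin m × Fin n → ℂ :=
      (((1 : Matrix (Fin m) (Fin m) ℂ) ⊗ₖ W)ᴴ).mulVec Ψ with hΦ'
    have keyB : ∀ c : Fin n → ℝ,
        star Ψ ⬝ᵥ (((1 : Matrix (Fin m) (Fin m) ℂ)
            ⊗ₖ (W * Matrix.diagonal (fun j => (c j : ℂ)) * Wᴴ)).mulVec Ψ)
          = ((∑ p : Fin m × Fin n, c p.2 * Complex.normSq (Φ' p) : ℝ) : ℂ) := by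
      intro c
      rw [one_kron_conj]
      exact conj_quad ((1 : Matrix (Fin m) (Fin m) ℂ) ⊗ₖ W) (fun p => c p.2) Ψ
    have hsum1' : ∑ p : Fin m × Fin n, Complex.normSq (Φ' p) = 1 := by
      have h1 := keyB (fun _ => 1)
      simp only [Complex.ofReal_one, Matrix.diagonal_one, Matrix.mul_one, hWW,
        Matrix.one_kronecker_one, Matrix.one_mulVec, hΨ, one_mul] at h1
      have := h1.symm
      rw [Complex.ofReal_eq_one] at this
      exact this
    have hval : (star Ψ ⬝ᵥ (((1 : Matrix (Fin m) (Fin m) ℂ) ⊗ₖ HB).mulVec Ψ)).re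
        = ∑ p : Fin m × Fin n, μ p.2 * Complex.normSq (Φ' p) := by
      rw [hspec, keyB μ, Complex.ofReal_re]
    rw [hval]
    calc (μ j0 : ℝ) = ∑ p : Fin m × Fin n, μ j0 * Complex.normSq (Φ' p) := by
          rw [← Finset.mul_sum, hsum1', mul_one]
      _ ≤ ∑ p : Fin m × Fin n, μ p.2 * Complex.normSq (Φ' p) :=
          Finset.sum_le_sum fun p _ =>
            mul_le_mul_of_nonneg_right (hj0 p.2 (Finset.mem_univ _))
              (Complex.normSq_nonneg _)
  -- eigenvector of HB for the minimal eigenvalue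
  set ΨB : Fin n → ℂ := fun j => W j j0 with hΨBdef
  have hΨB : star ΨB ⬝ᵥ ΨB = 1 := by
    have : star ΨB ⬝ᵥ ΨB = (Wᴴ * W) j0 j0 := by
      simp [dotProduct, Matrix.mul_apply, Matrix.conjTranspose_apply, hΨBdef]
    rw [this, hWW', Matrix.one_apply_eq]
  have hWy : Wᴴ.mulVec ΨB = fun k => (1 : Matrix (Fin n) (Fin n) ℂ) k j0 := by
    rw [← hWW']
    funext k
    simp [Matrix.mulVec, Matrix.mul_apply, dotProduct, hΨBdef]
  have hHBΨB : star ΨB ⬝ᵥ HB.mulVec ΨB = ((μ j0 : ℝ) : ℂ) := by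
    rw [hspec, conj_quad W μ ΨB, hWy]
    congr 1
    have : ∀ k : Fin n, μ k * Complex.normSq ((1 : Matrix (Fin n) (Fin n) ℂ) k j0)
        = if k = j0 then μ j0 else 0 := by
      intro k
      by_cases hk : k = j0 <;> simp [Matrix.one_apply, hk]
    rw [Finset.sum_congr rfl fun k _ => this k, Finset.sum_ite_eq']
    simp
  -- trial state ΨA ⊗ ΨB
  set Ψ' : Fin m × Fin n → ℂ := fun p => ΨA p.1 * ΨB p.2 with hΨ'def
  have hΨ'unit : star Ψ' ⬝ᵥ Ψ' = 1 := by
    rw [hΨ'def, dot_tens, hΨA, hΨB, one_mul]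
  -- quadratic forms at the trial state
  have htensq : ∀ M : Matrix (Fin m) (Fin m) ℂ,
      star Ψ' ⬝ᵥ ((M ⊗ₖ (1 : Matrix (Fin n) (Fin n) ℂ)).mulVec Ψ')
        = star ΨA ⬝ᵥ M.mulVec ΨA := by
    intro M
    rw [hΨ'def, kron_mulVec, dot_tens, Matrix.one_mulVec, hΨB, mul_one]
  have htensB : star Ψ' ⬝ᵥ (((1 : Matrix (Fin m) (Fin m) ℂ) ⊗ₖ HB).mulVec Ψ')
      = ((μ j0 : ℝ) : ℂ) := by
    rw [hΨ'def, kron_mulVec, dot_tens, Matrix.one_mulVec, hΨA, one_mul, hHBΨB]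
  -- HAB bounds
  have hABup : (star Ψ' ⬝ᵥ HAB.mulVec Ψ').re
      ≤ (star ΨA ⬝ᵥ KA.mulVec ΨA).re := by
    have := psd_re hub Ψ'
    rw [quad_sub, Complex.sub_re, htensq KA] at this
    linarith
  have hABlow : -(star Ψ ⬝ᵥ ((KA ⊗ₖ (1 : Matrix (Fin n) (Fin n) ℂ)).mulVec Ψ)).re
      ≤ (star Ψ ⬝ᵥ HAB.mulVec Ψ).re := by
    have := psd_re hlb Ψ
    rw [quad_add, Complex.add_re] at this
    linarith
  -- decompose ⟨Ψ|H|Ψ⟩ and ⟨Ψ'|H|Ψ'⟩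
  have hHdec : ∀ x : Fin m × Fin n → ℂ,
      (star x ⬝ᵥ H.mulVec x).re
        = (star x ⬝ᵥ ((HA ⊗ₖ (1 : Matrix (Fin n) (Fin n) ℂ)).mulVec x)).re
          + (star x ⬝ᵥ HAB.mulVec x).re
          + (star x ⬝ᵥ (((1 : Matrix (Fin m) (Fin m) ℂ) ⊗ₖ HB).mulVec x)).re := by
    intro x
    rw [hH, quad_add, quad_add, Complex.add_re, Complex.add_re]
  -- the variational upper bound
  have hup : (star Ψ ⬝ᵥ H.mulVec Ψ).re
      ≤ (star ΨA ⬝ᵥ HA.mulVec ΨA).re + (star ΨA ⬝ᵥ KA.mulVec ΨA).re + μ j0 := by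
    have hg := hground Ψ' hΨ'unit
    have hdec := hHdec Ψ'
    rw [htensq HA, htensB] at hdec
    rw [Complex.ofReal_re] at hdec
    linarith
  -- the lower bound via the reduced operator
  have hsplitAK : (HA - KA) ⊗ₖ (1 : Matrix (Fin n) (Fin n) ℂ)
      = HA ⊗ₖ (1 : Matrix (Fin n) (Fin n) ℂ) - KA ⊗ₖ (1 : Matrix (Fin n) (Fin n) ℂ) := by
    ext p q
    simp [Matrix.kroneckerMap_apply, sub_mul]
  have hlow : (star Ψ ⬝ᵥ (((HA - KA) ⊗ₖ (1 : Matrix (Fin n) (Fin n) ℂ)).mulVec Ψ)).re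
      ≤ (star ΨA ⬝ᵥ HA.mulVec ΨA).re + (star ΨA ⬝ᵥ KA.mulVec ΨA).re := by
    have hdec := hHdec Ψ
    rw [hsplitAK, quad_sub, Complex.sub_re]
    linarith
  -- conclude
  have hgoal : (star ΨA ⬝ᵥ ((HA + KA).mulVec ΨA)).re
      = (star ΨA ⬝ᵥ HA.mulVec ΨA).re + (star ΨA ⬝ᵥ KA.mulVec ΨA).re := by
    rw [quad_add, Complex.add_re]
  rw [hgoal]
  linarith
end

section
/- Rescaled Chebyshev AGSP shrinking bound: for 0 < Δ ≤ M, define f_ℓ(x) = T_ℓ((M + Δ − 2x)/(M − Δ)) / T_ℓ((M + Δ)/(M − Δ)). Then f_ℓ(0) = 1 and for all λ ∈ [Δ, M], |f_ℓ(λ)| ≤ 1/T_ℓ((M+Δ)/(M−Δ)) ≤ 2·(1 + 2√(Δ/M))^{−ℓ} ≤ 2 exp(−2ℓ√(Δ/M) + 2ℓ·(2Δ/M)). -/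
lemma T_real_cosh' (n : ℤ) (t : ℝ) :
    (Polynomial.Chebyshev.T ℝ n).eval (Real.cosh t) = Real.cosh (n * t) := by
  have h := Polynomial.Chebyshev.T_complex_cos (t * Complex.I) n
  rw [Complex.cos_mul_I] at h
  have h2 : Complex.cos ((n : ℂ) * (t * Complex.I)) = Complex.cosh ((n:ℂ) * t) := by
    rw [← Complex.cos_mul_I]; ring_nf
  rw [h2] at h
  have h3 := Polynomial.Chebyshev.complex_ofReal_eval_T (Real.cosh t) n
  rw [Complex.ofReal_cosh] at h3
  rw [← h3] at h
  have h4 : ((Real.cosh (n * t) : ℝ) : ℂ) = Complex.cosh ((n:ℂ) * t) := by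
    rw [Complex.ofReal_cosh]; push_cast; ring_nf
  rw [← h4] at h
  exact_mod_cast h

lemma T_lower' (n : ℕ) (y : ℝ) (hy : 1 ≤ y) :
    (y + Real.sqrt (y^2 - 1)) ^ n / 2 ≤ (Polynomial.Chebyshev.T ℝ n).eval y := by
  set s := Real.sqrt (y^2 - 1) with hs
  have hs0 : 0 ≤ s := Real.sqrt_nonneg _
  have hsq : s^2 = y^2 - 1 := Real.sq_sqrt (by nlinarith)
  have hpos : 0 < y + s := by nlinarith
  set t := Real.log (y + s) with ht
  have hexp : Real.exp t = y + s := Real.exp_log hpos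
  have hexpneg : Real.exp (-t) = y - s := by
    rw [Real.exp_neg, hexp]
    have : (y + s) * (y - s) = 1 := by nlinarith
    field_simp
    linarith [this]
  have hcosh : Real.cosh t = y := by
    rw [Real.cosh_eq, hexp, hexpneg]; ring
  have key : (Polynomial.Chebyshev.T ℝ n).eval y = Real.cosh (n * t) := by
    rw [← hcosh, T_real_cosh']; norm_cast
  rw [key, Real.cosh_eq]
  have h1 : (y + s) ^ n = Real.exp ((n:ℝ) * t) := by
    rw [← hexp, ← Real.exp_nat_mul]
  rw [h1]
  nlinarith [Real.exp_pos (-((n:ℝ)*t))]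

lemma T_abs_le' (n : ℕ) (y : ℝ) (h1 : -1 ≤ y) (h2 : y ≤ 1) :
    |(Polynomial.Chebyshev.T ℝ n).eval y| ≤ 1 := by
  have : y = Real.cos (Real.arccos y) := (Real.cos_arccos h1 h2).symm
  rw [this, Polynomial.Chebyshev.T_real_cos]
  exact Real.abs_cos_le_one _

/-- Rescaled Chebyshev AGSP shrinking bound: for `0 < Δ < M`, the rescaled Chebyshev
polynomial `f_ℓ(x) = T_ℓ((M+Δ−2x)/(M−Δ)) / T_ℓ((M+Δ)/(M−Δ))` satisfies `f_ℓ(0) = 1` and,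
for all `λ ∈ [Δ, M]`,
`|f_ℓ(λ)| ≤ 1/T_ℓ((M+Δ)/(M−Δ)) ≤ 2·(1 + 2√(Δ/M))^{−ℓ} ≤ 2·exp(−2ℓ√(Δ/M) + 2ℓ·(2Δ/M))`. -/
theorem chebyshev_agsp_shrinking (ℓ : ℕ) (Δ M : ℝ) (hΔ : 0 < Δ) (hM : Δ < M)
    (f : ℝ → ℝ)
    (hf : f = fun x => (Polynomial.Chebyshev.T ℝ ℓ).eval ((M + Δ - 2 * x) / (M - Δ)) /
      (Polynomial.Chebyshev.T ℝ ℓ).eval ((M + Δ) / (M - Δ))) :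
    f 0 = 1 ∧
    ∀ lam ∈ Set.Icc Δ M,
      |f lam| ≤ 1 / (Polynomial.Chebyshev.T ℝ ℓ).eval ((M + Δ) / (M - Δ)) ∧
      1 / (Polynomial.Chebyshev.T ℝ ℓ).eval ((M + Δ) / (M - Δ)) ≤
        2 / (1 + 2 * Real.sqrt (Δ / M)) ^ ℓ ∧
      2 / (1 + 2 * Real.sqrt (Δ / M)) ^ ℓ ≤
        2 * Real.exp (-(2 * ℓ) * Real.sqrt (Δ / M) + 2 * ℓ * (2 * Δ / M)) := by
  have hMΔ : 0 < M - Δ := by linarith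
  have hM0 : 0 < M := by linarith
  set y0 : ℝ := (M + Δ) / (M - Δ) with hy0def
  have hy0 : 1 ≤ y0 := by
    rw [hy0def, le_div_iff₀ hMΔ]; linarith
  set s : ℝ := Real.sqrt (Δ / M) with hsdef
  have hs0 : 0 ≤ s := Real.sqrt_nonneg _
  have hssq : s ^ 2 = Δ / M := Real.sq_sqrt (by positivity)
  -- base comparison : 1 + 2s ≤ y0 + sqrt (y0^2 - 1)
  have hroot : 2 * s ≤ Real.sqrt (y0 ^ 2 - 1) := by
    have h4 : (2*s)^2 ≤ y0^2 - 1 := by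
      have hy0v : y0 ^ 2 - 1 = ((M+Δ)^2 - (M-Δ)^2) / (M-Δ)^2 := by
        rw [hy0def]; field_simp
      rw [hy0v]
      have : (2*s)^2 = 4 * (Δ / M) := by rw [mul_pow, hssq]; ring
      rw [this, show (4:ℝ)*(Δ/M) = 4*Δ/M by ring, div_le_div_iff₀ hM0 (by positivity)]
      nlinarith [mul_pos (mul_pos hΔ hΔ) (show (0:ℝ) < 2*M - Δ by linarith)]
    calc 2*s = Real.sqrt ((2*s)^2) := by rw [Real.sqrt_sq (by positivity)]
    _ ≤ _ := Real.sqrt_le_sqrt h4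
  have hbase : 1 + 2*s ≤ y0 + Real.sqrt (y0^2 - 1) := by linarith
  have hTlow : (1 + 2*s)^ℓ / 2 ≤ (Polynomial.Chebyshev.T ℝ ℓ).eval y0 := by
    refine le_trans ?_ (T_lower' ℓ y0 hy0)
    gcongr
  have hTpos : 0 < (Polynomial.Chebyshev.T ℝ ℓ).eval y0 :=
    lt_of_lt_of_le (by positivity) hTlow
  constructor
  · rw [hf]
    simp only
    rw [show (M + Δ - 2 * 0) / (M - Δ) = y0 by rw [hy0def]; ring_nf]
    exact div_self (ne_of_gt hTpos)
  · intro lam hlam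
    obtain ⟨hl1, hl2⟩ := hlam
    set y : ℝ := (M + Δ - 2 * lam) / (M - Δ) with hydef
    have hym1 : -1 ≤ y := by
      rw [hydef, le_div_iff₀ hMΔ]; linarith
    have hy1 : y ≤ 1 := by
      rw [hydef, div_le_one hMΔ]; linarith
    refine ⟨?_, ?_, ?_⟩
    · rw [hf]
      simp only
      rw [abs_div, abs_of_pos hTpos]
      gcongr
      · exact T_abs_le' ℓ y hym1 hy1
    · rw [show (2:ℝ)/(1 + 2*s)^ℓ = 1/((1 + 2*s)^ℓ/2) by
        rw [one_div_div]]
      apply one_div_le_one_div_of_le (by positivity) hTlow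
    · have hE : -(2 * (ℓ:ℝ)) * s + 2 * ℓ * (2 * Δ / M) = ℓ * (4*s^2 - 2*s) := by
        rw [hssq]; ring
      rw [hE, Real.exp_nat_mul]
      have hkey : 1 ≤ Real.exp (4*s^2 - 2*s) * (1 + 2*s) := by
        nlinarith [Real.add_one_le_exp (4*s^2 - 2*s), Real.exp_pos (4*s^2-2*s),
          mul_nonneg (mul_nonneg hs0 hs0) hs0]
      rw [div_le_iff₀ (by positivity)]
      calc (2:ℝ) = 2 * 1 ^ ℓ := by norm_num
      _ ≤ 2 * (Real.exp (4*s^2 - 2*s) * (1 + 2*s)) ^ ℓ := by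
          gcongr
      _ = 2 * Real.exp (4*s^2 - 2*s) ^ ℓ * (1 + 2*s) ^ ℓ := by
          rw [mul_pow]; ring
end
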